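/- arXiv:1309.5126 — 6 statements merged into one kernel-verified Lean document; each statement's English description precedes it below -/
import Mathlib

section
/- Let W be a channel from finite set X to finite set Y and let P be a probability distribution on X with P(x) > 0 for all x. Define q_P(y) = Σ_x P(x)W(y|x) and the reverse dispersion V^r(P,W) = Σ_{x,y} P(x)W(y|x) [ln(W(y|x)/q_P(y)) − Σ_z (P(z)W(y|z)/q_P(y)) ln(W(y|z)/q_P(y))]². Then V^r(P,W) = 0 if and only if W is singular, i.e., for all (x,y,z) with W(y|x)W(y|z) > 0 one has W(y|x) = W(y|z). -/
open Finset

theorem stmt0 {X Y : Type*} [Fintype X] [Fintype Y] [Nonempty X] [Nonempty Y]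
    (W : X → Y → ℝ) (hW0 : ∀ x y, 0 ≤ W x y) (hW1 : ∀ x, ∑ y, W x y = 1)
    (P : X → ℝ) (hP0 : ∀ x, 0 < P x) (hP1 : ∑ x, P x = 1) :
    (∑ x, ∑ y, P x * W x y *
        (Real.log (W x y / (∑ z, P z * W z y)) -
          ∑ z, (P z * W z y / (∑ z', P z' * W z' y)) *
            Real.log (W z y / (∑ z', P z' * W z' y))) ^ 2 = 0)
    ↔ (∀ x y z, 0 < W x y * W z y → W x y = W z y) := by
  classical
  set q : Y → ℝ := fun y => ∑ z, P z * W z y with hq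
  have hqdef : ∀ y, (∑ z, P z * W z y) = q y := fun y => rfl
  simp only [hqdef]
  have hqpos : ∀ x y, 0 < W x y → 0 < q y := by
    intro x y hw
    have h1 : 0 < P x * W x y := mul_pos (hP0 x) hw
    exact h1.trans_le (Finset.single_le_sum
      (fun z _ => mul_nonneg (hP0 z).le (hW0 z y)) (Finset.mem_univ x))
  have hnn : ∀ x y, 0 ≤ P x * W x y *
      (Real.log (W x y / q y) -
        ∑ z, (P z * W z y / q y) * Real.log (W z y / q y)) ^ 2 :=
    fun x y => mul_nonneg (mul_nonneg (hP0 x).le (hW0 x y)) (sq_nonneg _)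
  constructor
  · intro h x y z hxz
    have hx : 0 < W x y := lt_of_le_of_ne (hW0 x y)
      (fun h0 => by simp [← h0] at hxz)
    have hz : 0 < W z y := lt_of_le_of_ne (hW0 z y)
      (fun h0 => by simp [← h0] at hxz)
    have hqy : 0 < q y := hqpos x y hx
    have hterm : ∀ a b, P a * W a b *
        (Real.log (W a b / q b) -
          ∑ c, (P c * W c b / q b) * Real.log (W c b / q b)) ^ 2 = 0 := by
      intro a b
      have h1 := (Finset.sum_eq_zero_iff_of_nonneg
        (fun a _ => Finset.sum_nonneg fun b _ => hnn a b)).mp h a (Finset.mem_univ a)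
      exact (Finset.sum_eq_zero_iff_of_nonneg
        (fun b _ => hnn a b)).mp h1 b (Finset.mem_univ b)
    have hbr : ∀ a, 0 < W a y → Real.log (W a y / q y) =
        ∑ c, (P c * W c y / q y) * Real.log (W c y / q y) := by
      intro a ha
      have := hterm a y
      have hpw : P a * W a y ≠ 0 := (mul_pos (hP0 a) ha).ne'
      have hsq : (Real.log (W a y / q y) -
          ∑ c, (P c * W c y / q y) * Real.log (W c y / q y)) ^ 2 = 0 := by
        rcases mul_eq_zero.mp this with h' | h'
        · exact absurd h' hpw
        · exact h'
      have := pow_eq_zero_iff (n := 2) (by norm_num) |>.mp hsq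
      linarith [sub_eq_zero.mp this]
    have heq : Real.log (W x y / q y) = Real.log (W z y / q y) := by
      rw [hbr x hx, hbr z hz]
    have := Real.log_injOn_pos (Set.mem_Ioi.mpr (div_pos hx hqy))
      (Set.mem_Ioi.mpr (div_pos hz hqy)) heq
    have h2 := congrArg (· * q y) this
    simpa [div_mul_cancel₀, hqy.ne'] using h2
  · intro hs
    apply Finset.sum_eq_zero; intro x _
    apply Finset.sum_eq_zero; intro y _
    rcases eq_or_lt_of_le (hW0 x y) with h0 | hpos
    · simp [← h0]
    · have hqy : 0 < q y := hqpos x y hpos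
      have hA : (∑ c, (P c * W c y / q y) * Real.log (W c y / q y)) =
          Real.log (W x y / q y) := by
        have hc : ∀ c ∈ Finset.univ, (P c * W c y / q y) * Real.log (W c y / q y) =
            (P c * W c y / q y) * Real.log (W x y / q y) := by
          intro c _
          rcases eq_or_lt_of_le (hW0 c y) with h0 | hcpos
          · simp [← h0]
          · rw [hs c y x (mul_pos hcpos hpos)]
        rw [Finset.sum_congr rfl hc, ← Finset.sum_mul, ← Finset.sum_div,
          hqdef y, div_self hqy.ne', one_mul]
      rw [hA, sub_self]
      ring
end

section
/- Let W be a channel from X to Y and P a distribution on X with P(x) > 0 for all x. Then V^r(P,W) = 0 holds if and only if for every y ∈ Y and every x ∈ X with W(y|x) > 0, one has ln W(y|x) = Σ_z (P(z)W(y|z)/q_P(y)) ln W(y|z), where q_P(y) = Σ_z P(z)W(y|z). -/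
open Finset

theorem stmt1 {X Y : Type*} [Fintype X] [Fintype Y] [Nonempty X] [Nonempty Y]
    (W : X → Y → ℝ) (hW0 : ∀ x y, 0 ≤ W x y) (hW1 : ∀ x, ∑ y, W x y = 1)
    (P : X → ℝ) (hP0 : ∀ x, 0 < P x) (hP1 : ∑ x, P x = 1) :
    (∑ x, ∑ y, P x * W x y *
        (Real.log (W x y / (∑ z, P z * W z y)) -
          ∑ z, (P z * W z y / (∑ z', P z' * W z' y)) *
            Real.log (W z y / (∑ z', P z' * W z' y))) ^ 2 = 0)
    ↔ (∀ y x, 0 < W x y →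
        Real.log (W x y) =
          ∑ z, (P z * W z y / (∑ z', P z' * W z' y)) * Real.log (W z y)) := by
  set q : Y → ℝ := fun y => ∑ z, P z * W z y with hq
  have hq0 : ∀ y, 0 ≤ q y := fun y =>
    Finset.sum_nonneg fun z _ => mul_nonneg (hP0 z).le (hW0 z y)
  have hqpos : ∀ x y, 0 < W x y → 0 < q y := by
    intro x y hx
    have : 0 < P x * W x y := mul_pos (hP0 x) hx
    exact lt_of_lt_of_le this (Finset.single_le_sum
      (fun z _ => mul_nonneg (hP0 z).le (hW0 z y)) (Finset.mem_univ x))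
  -- key rewriting of the bracket when q y > 0
  have key : ∀ y, 0 < q y →
      ∀ x, 0 < W x y →
      (Real.log (W x y / q y) -
        ∑ z, (P z * W z y / q y) * Real.log (W z y / q y))
      = Real.log (W x y) - ∑ z, (P z * W z y / q y) * Real.log (W z y) := by
    intro y hqy x hx
    have hsum1 : ∑ z, P z * W z y / q y = 1 := by
      rw [← Finset.sum_div, div_eq_one_iff_eq hqy.ne']
    have hterm : ∀ z, (P z * W z y / q y) * Real.log (W z y / q y)
        = (P z * W z y / q y) * Real.log (W z y) - (P z * W z y / q y) * Real.log (q y) := by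
      intro z
      rcases eq_or_lt_of_le (hW0 z y) with h0 | hpos
      · simp [← h0]
      · rw [Real.log_div hpos.ne' hqy.ne']; ring
    rw [Real.log_div hx.ne' hqy.ne']
    calc Real.log (W x y) - Real.log (q y) -
          ∑ z, (P z * W z y / q y) * Real.log (W z y / q y)
        = Real.log (W x y) - Real.log (q y) -
          (∑ z, ((P z * W z y / q y) * Real.log (W z y)
            - (P z * W z y / q y) * Real.log (q y))) := by
          congr 1
          exact Finset.sum_congr rfl fun z _ => hterm z
      _ = Real.log (W x y) - Real.log (q y) -
          ((∑ z, (P z * W z y / q y) * Real.log (W z y))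
            - (∑ z, P z * W z y / q y) * Real.log (q y)) := by
          rw [Finset.sum_sub_distrib, ← Finset.sum_mul]
      _ = Real.log (W x y) - ∑ z, (P z * W z y / q y) * Real.log (W z y) := by
          rw [hsum1]; ring
  have hnn : ∀ x ∈ (Finset.univ : Finset X), ∀ y ∈ (Finset.univ : Finset Y),
      0 ≤ P x * W x y *
        (Real.log (W x y / q y) -
          ∑ z, (P z * W z y / q y) * Real.log (W z y / q y)) ^ 2 := by
    intro x _ y _
    exact mul_nonneg (mul_nonneg (hP0 x).le (hW0 x y)) (sq_nonneg _)
  constructor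
  · intro h y x hx
    have h1 : ∀ x ∈ (Finset.univ : Finset X),
        (∑ y, P x * W x y *
          (Real.log (W x y / q y) -
            ∑ z, (P z * W z y / q y) * Real.log (W z y / q y)) ^ 2) = 0 := by
      rw [← Finset.sum_eq_zero_iff_of_nonneg
        (fun x _ => Finset.sum_nonneg (fun y _ => hnn x (Finset.mem_univ x) y (Finset.mem_univ y)))]
      exact h
    have h2 := (Finset.sum_eq_zero_iff_of_nonneg
      (hnn x (Finset.mem_univ x))).mp (h1 x (Finset.mem_univ x)) y (Finset.mem_univ y)
    have hPW : P x * W x y ≠ 0 := (mul_pos (hP0 x) hx).ne'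
    have hsq : (Real.log (W x y / q y) -
        ∑ z, (P z * W z y / q y) * Real.log (W z y / q y)) ^ 2 = 0 := by
      rcases mul_eq_zero.mp h2 with h | h
      · exact absurd h hPW
      · exact h
    have hbr := pow_eq_zero_iff (n := 2) (by norm_num) |>.mp hsq
    have := key y (hqpos x y hx) x hx
    rw [this] at hbr
    linarith [hbr]
  · intro h
    apply Finset.sum_eq_zero
    intro x _
    apply Finset.sum_eq_zero
    intro y _
    rcases eq_or_lt_of_le (hW0 x y) with h0 | hpos
    · rw [← h0]; ring
    · have := key y (hqpos x y hpos) x hpos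
      have heq := h y x hpos
      have : (Real.log (W x y / q y) -
          ∑ z, (P z * W z y / q y) * Real.log (W z y / q y)) = 0 := by
        rw [this, heq]; ring
      rw [this]; ring
end

section
/- Let W be a singular channel from X to Y, n a positive integer, Q a distribution on X, and R ≥ 0. Define α_y(Q) = Σ_{x:W(y|x)>0} Q(x), q_Q(y) = Σ_x Q(x)W(y|x), and S_R(Q) = { y^n ∈ Yⁿ : (1/n) Σᵢ ln(1/α_{yᵢ}(Q)) ≤ R }. Consider a code with M messages, codewords x^n(1),…,x^n(M) ∈ Xⁿ and disjoint decoding regions A₁,…,A_M covering Yⁿ, with average error probability P̄_e = (1/M) Σ_m W(A_mᶜ | x^n(m)). Suppose there is z^n ∈ Xⁿ such that W(S_R(Q)|x^n(m)) = W(S_R(Q)|z^n) for all m, and q_Q(y) > 0 whenever W(y|x) > 0 for some letter x appearing in some codeword. If M ≥ e^{nR}, then P̄_e ≥ W(S_R(Q)|z^n) − Σ_{y^n ∈ S_R(Q)} q_Q(y^n) · exp(−n[R − (1/n)Σᵢ ln(1/α_{yᵢ}(Q))]), where q_Q(y^n) = Πᵢ q_Q(yᵢ) and W(y^n|x^n)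 = Πᵢ W(yᵢ|xᵢ). -/
open Finset

theorem stmt7 {X Y : Type*} [Fintype X] [Fintype Y] [DecidableEq X] [DecidableEq Y]
    [Nonempty X] [Nonempty Y]
    (W : X → Y → ℝ) (hW0 : ∀ x y, 0 ≤ W x y) (hW1 : ∀ x, ∑ y, W x y = 1)
    (hsing : ∀ x y z, 0 < W x y * W z y → W x y = W z y)
    (n : ℕ) (hn : 0 < n)
    (Q : X → ℝ) (hQ0 : ∀ x, 0 ≤ Q x) (hQ1 : ∑ x, Q x = 1)
    (R : ℝ) (hR : 0 ≤ R)
    (M : ℕ) (hM : 0 < M)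
    (cw : Fin M → Fin n → X) (A : Fin M → Finset (Fin n → Y))
    (hdisj : ∀ m m', m ≠ m' → Disjoint (A m) (A m'))
    (hcover : ∀ yn : Fin n → Y, ∃ m, yn ∈ A m)
    -- `S_R(Q)` : output sequences whose empirical `-log α` is at most `R`
    (SR : Finset (Fin n → Y))
    (hSR : SR = Finset.univ.filter (fun yn : Fin n → Y =>
      (1 / (n : ℝ)) * ∑ i, Real.log
        (1 / (∑ x ∈ Finset.univ.filter (fun x => 0 < W x (yn i)), Q x)) ≤ R))
    (zn : Fin n → X)
    (hz : ∀ m, ∑ yn ∈ SR, ∏ i, W (cw m i) (yn i) = ∑ yn ∈ SR, ∏ i, W (zn i) (yn i))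
    (hdom : ∀ x' : X, (∃ m i, cw m i = x') →
      ∀ y, 0 < W x' y → 0 < ∑ x, Q x * W x y)
    (hMrate : Real.exp (n * R) ≤ (M : ℝ)) :
    (M : ℝ)⁻¹ * ∑ m, ∑ yn ∈ (A m)ᶜ, ∏ i, W (cw m i) (yn i)
      ≥ (∑ yn ∈ SR, ∏ i, W (zn i) (yn i))
        - ∑ yn ∈ SR, (∏ i, (∑ x, Q x * W x (yn i))) *
            Real.exp (-(n * R - ∑ i, Real.log
              (1 / (∑ x ∈ Finset.univ.filter (fun x => 0 < W x (yn i)), Q x)))) := by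
  set P : Fin M → (Fin n → Y) → ℝ := fun m yn => ∏ i, W (cw m i) (yn i) with hP
  have hPnn : ∀ m yn, 0 ≤ P m yn := fun m yn => Finset.prod_nonneg fun i _ => hW0 _ _
  set q : Y → ℝ := fun y => ∑ x, Q x * W x y with hq
  set α : Y → ℝ := fun y => ∑ x ∈ Finset.univ.filter (fun x => 0 < W x y), Q x with hα
  set B : (Fin n → Y) → ℝ := fun yn =>
    (∏ i, q (yn i)) * Real.exp (∑ i, Real.log (1 / α (yn i))) with hB
  have hqnn : ∀ y, 0 ≤ q y := fun y => Finset.sum_nonneg fun x _ => mul_nonneg (hQ0 x) (hW0 x y)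
  have hBnn : ∀ yn, 0 ≤ B yn :=
    fun yn => mul_nonneg (Finset.prod_nonneg fun i _ => hqnn _) (Real.exp_pos _).le
  -- key pointwise bound
  have key : ∀ m yn, P m yn ≤ B yn := by
    intro m yn
    by_cases h : ∀ i, 0 < W (cw m i) (yn i)
    · have hstep : ∀ i, W (cw m i) (yn i) = q (yn i) * Real.exp (Real.log (1 / α (yn i))) := by
        intro i
        have hw := h i
        have hqα : q (yn i) = W (cw m i) (yn i) * α (yn i) := by
          simp only [hq, hα]
          rw [Finset.sum_filter, Finset.mul_sum]
          refine Finset.sum_congr rfl fun x _ => ?_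
          by_cases hx : 0 < W x (yn i)
          · rw [if_pos hx, hsing (cw m i) (yn i) x (mul_pos hw hx)]; ring
          · rw [if_neg hx]
            have : W x (yn i) = 0 := le_antisymm (not_lt.mp hx) (hW0 _ _)
            simp [this]
        have hqpos : 0 < q (yn i) := hdom (cw m i) ⟨m, i, rfl⟩ (yn i) hw
        have hαpos : 0 < α (yn i) := by
          by_contra hc
          push_neg at hc
          have hle : W (cw m i) (yn i) * α (yn i) ≤ 0 :=
            mul_nonpos_of_nonneg_of_nonpos (hW0 _ _) hc
          rw [← hqα] at hle
          linarith
        rw [Real.exp_log (by positivity : (0:ℝ) < 1 / α (yn i))]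
        rw [hqα]; field_simp
      have heqP : P m yn = B yn := by
        calc P m yn = ∏ i, (q (yn i) * Real.exp (Real.log (1 / α (yn i)))) :=
              Finset.prod_congr rfl (fun i _ => hstep i)
          _ = (∏ i, q (yn i)) * ∏ i, Real.exp (Real.log (1 / α (yn i))) :=
              Finset.prod_mul_distrib
          _ = B yn := by simp only [hB, Real.exp_sum]
      exact le_of_eq heqP
    · push_neg at h
      obtain ⟨i, hi⟩ := h
      have h0 : W (cw m i) (yn i) = 0 := le_antisymm hi (hW0 _ _)
      have : P m yn = 0 := Finset.prod_eq_zero (Finset.mem_univ i) h0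
      rw [this]; exact hBnn yn
  -- counting: decoding regions are disjoint
  have hcard : ∀ yn : Fin n → Y, (Finset.univ.filter (fun m => yn ∈ A m)).card ≤ 1 := by
    intro yn
    refine Finset.card_le_one.mpr ?_
    intro a ha b hb
    simp only [Finset.mem_filter] at ha hb
    by_contra hne
    exact (Finset.disjoint_left.mp (hdisj a b hne) ha.2) hb.2
  have step3 : ∑ m, ∑ yn ∈ SR ∩ A m, P m yn ≤ ∑ yn ∈ SR, B yn := by
    have h1 : ∑ m, ∑ yn ∈ SR ∩ A m, P m yn ≤ ∑ m, ∑ yn ∈ SR ∩ A m, B yn :=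
      Finset.sum_le_sum fun m _ => Finset.sum_le_sum fun yn _ => key m yn
    refine h1.trans ?_
    have h2 : ∀ m, ∑ yn ∈ SR ∩ A m, B yn = ∑ yn ∈ SR, if yn ∈ A m then B yn else 0 := by
      intro m
      rw [← Finset.sum_filter, Finset.filter_mem_eq_inter]
    simp_rw [h2]
    rw [Finset.sum_comm]
    refine Finset.sum_le_sum fun yn _ => ?_
    calc (∑ m, if yn ∈ A m then B yn else 0)
        = ∑ m ∈ Finset.univ.filter (fun m => yn ∈ A m), B yn := (Finset.sum_filter _ _).symm
      _ = (Finset.univ.filter (fun m => yn ∈ A m)).card • B yn := Finset.sum_const _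
      _ ≤ 1 • B yn := nsmul_le_nsmul_left (hBnn yn) (hcard yn)
      _ = B yn := one_smul _ _
  -- per-codeword lower bound
  have step1 : ∀ m, ∑ yn ∈ SR, P m yn - ∑ yn ∈ SR ∩ A m, P m yn ≤ ∑ yn ∈ (A m)ᶜ, P m yn := by
    intro m
    have hsplit : ∑ yn ∈ SR ∩ A m, P m yn + ∑ yn ∈ SR \ A m, P m yn = ∑ yn ∈ SR, P m yn :=
      Finset.sum_inter_add_sum_sdiff SR (A m) (P m)
    have hsub : SR \ A m ⊆ (A m)ᶜ := by
      intro yn hyn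
      simp only [Finset.mem_sdiff] at hyn
      simpa [Finset.mem_compl] using hyn.2
    have := Finset.sum_le_sum_of_subset_of_nonneg hsub (fun yn _ _ => hPnn m yn)
    linarith
  set Wz : ℝ := ∑ yn ∈ SR, ∏ i, W (zn i) (yn i) with hWz
  have hsum : (M : ℝ) * Wz - ∑ yn ∈ SR, B yn ≤ ∑ m, ∑ yn ∈ (A m)ᶜ, P m yn := by
    have h1 : ∑ m, (∑ yn ∈ SR, P m yn - ∑ yn ∈ SR ∩ A m, P m yn)
        ≤ ∑ m, ∑ yn ∈ (A m)ᶜ, P m yn := Finset.sum_le_sum fun m _ => step1 m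
    have h2 : ∑ m, (∑ yn ∈ SR, P m yn - ∑ yn ∈ SR ∩ A m, P m yn)
        = (M : ℝ) * Wz - ∑ m, ∑ yn ∈ SR ∩ A m, P m yn := by
      rw [Finset.sum_sub_distrib]
      congr 1
      have : ∀ m : Fin M, ∑ yn ∈ SR, P m yn = Wz := fun m => hz m
      simp_rw [this]
      rw [Finset.sum_const, Finset.card_univ, Fintype.card_fin, nsmul_eq_mul]
    linarith [step3]
  -- put everything together
  have hMpos : (0:ℝ) < (M:ℝ) := by exact_mod_cast hM
  have hinv : (M:ℝ)⁻¹ ≤ Real.exp (-(n * R)) := by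
    rw [Real.exp_neg]
    exact inv_anti₀ (Real.exp_pos _) hMrate
  have hBsum_nn : 0 ≤ ∑ yn ∈ SR, B yn := Finset.sum_nonneg fun yn _ => hBnn yn
  have hmain : Wz - (M:ℝ)⁻¹ * ∑ yn ∈ SR, B yn
      ≤ (M : ℝ)⁻¹ * ∑ m, ∑ yn ∈ (A m)ᶜ, P m yn := by
    have h := mul_le_mul_of_nonneg_left hsum (le_of_lt (inv_pos.mpr hMpos))
    calc Wz - (M:ℝ)⁻¹ * ∑ yn ∈ SR, B yn
        = (M:ℝ)⁻¹ * ((M : ℝ) * Wz - ∑ yn ∈ SR, B yn) := by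
          rw [mul_sub, ← mul_assoc, inv_mul_cancel₀ hMpos.ne', one_mul]
      _ ≤ (M : ℝ)⁻¹ * ∑ m, ∑ yn ∈ (A m)ᶜ, P m yn := h
  have hfinal : Wz - ∑ yn ∈ SR, (∏ i, q (yn i)) *
      Real.exp (-(n * R - ∑ i, Real.log (1 / α (yn i))))
      ≤ Wz - (M:ℝ)⁻¹ * ∑ yn ∈ SR, B yn := by
    have : (M:ℝ)⁻¹ * ∑ yn ∈ SR, B yn
        ≤ ∑ yn ∈ SR, (∏ i, q (yn i)) * Real.exp (-(n * R - ∑ i, Real.log (1 / α (yn i)))) := by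
      calc (M:ℝ)⁻¹ * ∑ yn ∈ SR, B yn
          ≤ Real.exp (-(n * R)) * ∑ yn ∈ SR, B yn :=
            mul_le_mul_of_nonneg_right hinv hBsum_nn
        _ = ∑ yn ∈ SR, (∏ i, q (yn i)) *
              Real.exp (-(n * R - ∑ i, Real.log (1 / α (yn i)))) := by
            rw [Finset.mul_sum]
            refine Finset.sum_congr rfl fun yn _ => ?_
            rw [hB]
            rw [show -(n * R - ∑ i, Real.log (1 / α (yn i)))
              = -(n*R) + ∑ i, Real.log (1 / α (yn i)) by ring, Real.exp_add]
            ring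
    linarith
  exact le_trans hfinal hmain
end

section
/- Let W be a symmetric and singular channel with no all-zero column, q the uniform-input output distribution, α_y = Σ_{x:W(y|x)>0} 1/|X|, and x₀ ∈ X fixed. Then, with Y ∼ q: E[−ln α_Y] = C(W), Var[−ln α_Y] = Var_{Y∼W(·|x₀)}[ln(W(Y|x₀)/q(Y))], and E[|−ln α_Y − C(W)|³] = E_{Y∼W(·|x₀)}[|ln(W(Y|x₀)/q(Y)) − C(W)|³]. In other words, −ln α_Y under the output distribution q has the same first three (absolute central) moments as the information density under any input. -/
open Finset
/-- Mutual information `I(P;W)` of a channel `W` under input distribution `P`. -/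
noncomputable def mutualInfo {X Y : Type*} [Fintype X] [Fintype Y]
    (P : X → ℝ) (W : X → Y → ℝ) : ℝ :=
  ∑ x, ∑ y, P x * W x y * Real.log (W x y / ∑ z, P z * W z y)

/-- Channel capacity `C(W) = max_P I(P;W)`. -/
noncomputable def capacity {X Y : Type*} [Fintype X] [Fintype Y]
    (W : X → Y → ℝ) : ℝ :=
  sSup {c : ℝ | ∃ P : X → ℝ, (∀ x, 0 ≤ P x) ∧ (∑ x, P x = 1) ∧ c = mutualInfo P W}

/-- Gallager symmetry. -/
def GallagerSymmetric {X Y : Type*} (W : X → Y → ℝ) : Prop :=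
  ∃ (ι : Type) (c : Y → ι),
    (∀ (l : ι) (x x' : X), ∃ σ : {y : Y // c y = l} ≃ {y : Y // c y = l},
        ∀ y : {y : Y // c y = l}, W x' (σ y).1 = W x y.1) ∧
    (∀ (y y' : Y), c y = c y' → ∃ τ : X ≃ X, ∀ x, W (τ x) y' = W x y)

lemma rowsum_const {X Y : Type*} [Fintype X] [Fintype Y]
    (W : X → Y → ℝ) (ι : Type) (c : Y → ι)
    (hrow : ∀ (l : ι) (x x' : X), ∃ σ : {y : Y // c y = l} ≃ {y : Y // c y = l},
        ∀ y : {y : Y // c y = l}, W x' (σ y).1 = W x y.1)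
    (h : Y → ℝ) (hh : ∀ y y', c y = c y' → h y = h y')
    (x x' : X) :
    ∑ y, W x y * h y = ∑ y, W x' y * h y := by
  classical
  have key : ∀ x'' : X, ∑ y, W x'' y * h y
      = ∑ l ∈ univ.image c, ∑ y ∈ univ.filter (fun y => c y = l), W x'' y * h y := by
    intro x''
    exact (Finset.sum_fiberwise_of_maps_to
      (fun y _ => Finset.mem_image_of_mem c (mem_univ y)) _).symm
  rw [key x, key x']
  refine Finset.sum_congr rfl fun l _ => ?_
  obtain ⟨σ, hσ⟩ := hrow l x x'
  have conv : ∀ x'' : X, ∑ y ∈ univ.filter (fun y => c y = l), W x'' y * h y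
      = ∑ y : {y : Y // c y = l}, W x'' y.1 * h y.1 := by
    intro x''
    exact Finset.sum_subtype _ (fun y => by simp) _
  rw [conv x, conv x', ← Equiv.sum_comp σ (fun y => W x' y.1 * h y.1)]
  refine Finset.sum_congr rfl fun y _ => ?_
  rw [hσ y, hh (σ y).1 y.1 (by rw [(σ y).2, y.2])]

theorem stmt10 {X Y : Type*} [Fintype X] [Fintype Y] [Nonempty X] [Nonempty Y]
    (W : X → Y → ℝ) (hW0 : ∀ x y, 0 ≤ W x y) (hW1 : ∀ x, ∑ y, W x y = 1)
    (hsym : GallagerSymmetric W)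
    (hsing : ∀ x y z, 0 < W x y * W z y → W x y = W z y)
    (hcol : ∀ y, ∃ x, 0 < W x y)
    (q : Y → ℝ) (hq : ∀ y, q y = ∑ x, ((Fintype.card X : ℝ))⁻¹ * W x y)
    (α : Y → ℝ)
    (hα : ∀ y, α y = ∑ _x ∈ Finset.univ.filter (fun x => 0 < W x y),
      ((Fintype.card X : ℝ))⁻¹)
    (x₀ : X) :
    (∑ y, q y * (-Real.log (α y)) = capacity W) ∧
    (∑ y, q y * (Real.log (α y)) ^ 2 - (∑ y, q y * Real.log (α y)) ^ 2
      = ∑ y, W x₀ y * (Real.log (W x₀ y / q y)) ^ 2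
        - (∑ y, W x₀ y * Real.log (W x₀ y / q y)) ^ 2) ∧
    (∑ y, q y * |(-Real.log (α y)) - capacity W| ^ 3
      = ∑ y, W x₀ y * |Real.log (W x₀ y / q y) - capacity W| ^ 3) := by
  classical
  obtain ⟨ι, c, hrow, hcls⟩ := hsym
  have hnpos : (0:ℝ) < (Fintype.card X : ℝ) := by
    exact_mod_cast Fintype.card_pos
  have hnne : ((Fintype.card X : ℝ)) ≠ 0 := ne_of_gt hnpos
  -- α as card * n⁻¹
  have hαcard : ∀ y, α y
      = ((univ.filter (fun x => 0 < W x y)).card : ℝ) * (Fintype.card X : ℝ)⁻¹ := by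
    intro y
    rw [hα y, Finset.sum_const, nsmul_eq_mul]
  -- α constant on classes
  have hαclass : ∀ y y', c y = c y' → α y = α y' := by
    intro y y' hcc
    obtain ⟨τ, hτ⟩ := hcls y y' hcc
    rw [hαcard, hαcard]
    congr 2
    apply Finset.card_bij' (fun x _ => τ x) (fun x _ => τ.symm x)
    · intro a ha
      simp only [mem_filter, mem_univ, true_and] at ha ⊢
      rw [hτ a]; exact ha
    · intro a ha
      simp only [mem_filter, mem_univ, true_and] at ha ⊢
      have := hτ (τ.symm a)
      rw [Equiv.apply_symm_apply] at this
      rw [← this]; exact ha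
    · intro a _; exact τ.symm_apply_apply a
    · intro a _; exact τ.apply_symm_apply a
  -- α positive
  have hαpos : ∀ y, 0 < α y := by
    intro y
    obtain ⟨x, hx⟩ := hcol y
    rw [hαcard]
    apply mul_pos _ (inv_pos.mpr hnpos)
    have : x ∈ univ.filter (fun x => 0 < W x y) := by simp [hx]
    exact_mod_cast Finset.card_pos.mpr ⟨x, this⟩
  -- q y = α y * W x y when W x y > 0
  have hqα : ∀ x y, 0 < W x y → q y = α y * W x y := by
    intro x y hx
    rw [hq y, hαcard, ← Finset.mul_sum]
    have h1 : ∑ z ∈ univ.filter (fun z => 0 < W z y), W z y = ∑ z, W z y := by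
      apply Finset.sum_filter_of_ne
      intro z _ hz
      exact lt_of_le_of_ne (hW0 z y) (Ne.symm hz)
    have h2 : ∑ z ∈ univ.filter (fun z => 0 < W z y), W z y
        = ((univ.filter (fun z => 0 < W z y)).card : ℝ) * W x y := by
      rw [Finset.sum_congr rfl (fun z hz => ?_), Finset.sum_const, nsmul_eq_mul]
      simp only [mem_filter, mem_univ, true_and] at hz
      exact (hsing z y x (mul_pos hz hx)).symm ▸ hsing z y x (mul_pos hz hx) ▸ rfl
    rw [← h1, h2]; ring
  have hqpos : ∀ y, 0 < q y := by
    intro y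
    obtain ⟨x, hx⟩ := hcol y
    rw [hqα x y hx]
    exact mul_pos (hαpos y) hx
  -- log identity
  have hlog : ∀ x y, 0 < W x y → Real.log (W x y / q y) = -Real.log (α y) := by
    intro x y hx
    rw [hqα x y hx, mul_comm, div_mul_eq_div_div, div_self (ne_of_gt hx),
      one_div, Real.log_inv]
  -- sums against W x equal sums against q, for class-constant integrands
  have havg : ∀ h : Y → ℝ, (∀ y y', c y = c y' → h y = h y') →
      ∀ x : X, ∑ y, W x y * h y = ∑ y, q y * h y := by
    intro h hh x
    have h1 : ∑ y, q y * h y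
        = ∑ x' : X, (Fintype.card X : ℝ)⁻¹ * ∑ y, W x' y * h y := by
      simp_rw [hq, Finset.sum_mul, Finset.mul_sum, mul_assoc]
      rw [Finset.sum_comm]
    rw [h1]
    have h2 : ∀ x' : X, ∑ y, W x' y * h y = ∑ y, W x y * h y :=
      fun x' => rowsum_const W ι c hrow h hh x' x
    simp_rw [h2]
    rw [Finset.sum_const, card_univ, nsmul_eq_mul, ← mul_assoc,
      mul_inv_cancel₀ hnne, one_mul]
  have hαcls' : ∀ (g : ℝ → ℝ) (y y' : Y), c y = c y' →
      g (-Real.log (α y)) = g (-Real.log (α y')) := fun g y y' hcc => by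
    rw [hαclass y y' hcc]
  -- termwise replacement of information density
  have hterm : ∀ (g : ℝ → ℝ) (x : X),
      ∑ y, W x y * g (Real.log (W x y / q y)) = ∑ y, W x y * g (-Real.log (α y)) := by
    intro g x
    refine Finset.sum_congr rfl fun y _ => ?_
    rcases eq_or_lt_of_le (hW0 x y) with h0 | hpos
    · rw [← h0]; ring
    · rw [hlog x y hpos]
  set C₀ : ℝ := ∑ y, q y * (-Real.log (α y)) with hC₀
  -- uniform input achieves C₀
  have hmem : C₀ ∈ {c : ℝ | ∃ P : X → ℝ,
      (∀ x, 0 ≤ P x) ∧ (∑ x, P x = 1) ∧ c = mutualInfo P W} := by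
    refine ⟨fun _ => (Fintype.card X : ℝ)⁻¹, fun _ => by positivity, ?_, ?_⟩
    · rw [Finset.sum_const, card_univ, nsmul_eq_mul, mul_inv_cancel₀ hnne]
    · unfold mutualInfo
      have : ∀ x : X, ∑ y, (Fintype.card X : ℝ)⁻¹ * W x y *
          Real.log (W x y / ∑ z, (Fintype.card X : ℝ)⁻¹ * W z y)
          = (Fintype.card X : ℝ)⁻¹ * C₀ := by
        intro x
        have e1 : ∀ y : Y, (∑ z, (Fintype.card X : ℝ)⁻¹ * W z y) = q y :=
          fun y => (hq y).symm
        simp_rw [e1, mul_assoc, ← Finset.mul_sum]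
        rw [hterm (fun t => t) x, havg (fun y => -Real.log (α y)) (hαcls' id) x]
      simp_rw [this]
      rw [Finset.sum_const, card_univ, nsmul_eq_mul, ← mul_assoc,
        mul_inv_cancel₀ hnne, one_mul]
  -- upper bound
  have hub : ∀ a ∈ {c : ℝ | ∃ P : X → ℝ,
      (∀ x, 0 ≤ P x) ∧ (∑ x, P x = 1) ∧ c = mutualInfo P W}, a ≤ C₀ := by
    rintro a ⟨P, hP0, hP1, rfl⟩
    set A : Y → ℝ := fun y => ∑ z, P z * W z y with hA
    have hA0 : ∀ y, 0 ≤ A y :=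
      fun y => Finset.sum_nonneg fun z _ => mul_nonneg (hP0 z) (hW0 z y)
    have hsplit : ∀ (x : X) (y : Y), P x * W x y * Real.log (W x y / A y)
        = P x * W x y * (-Real.log (α y)) + P x * W x y * Real.log (q y / A y) := by
      intro x y
      rcases eq_or_lt_of_le (mul_nonneg (hP0 x) (hW0 x y)) with h0 | hpos
      · rw [← h0]; ring
      · have hWpos : 0 < W x y := by
          rcases (hW0 x y).lt_or_eq with h | h
          · exact h
          · exfalso; rw [← h, mul_zero] at hpos; exact lt_irrefl 0 hpos
        have hApos : 0 < A y := lt_of_lt_of_le hpos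
          (Finset.single_le_sum (fun z _ => mul_nonneg (hP0 z) (hW0 z y)) (mem_univ x))
        rw [← hlog x y hWpos, Real.log_div (ne_of_gt hWpos) (ne_of_gt hApos),
          Real.log_div (ne_of_gt hWpos) (ne_of_gt (hqpos y)),
          Real.log_div (ne_of_gt (hqpos y)) (ne_of_gt hApos)]
        ring
    unfold mutualInfo
    show ∑ x, ∑ y, P x * W x y * Real.log (W x y / A y) ≤ C₀
    simp_rw [hsplit, Finset.sum_add_distrib]
    have hfirst : ∑ x, ∑ y, P x * W x y * (-Real.log (α y)) = C₀ := by
      have : ∀ x : X, ∑ y, P x * W x y * (-Real.log (α y)) = P x * C₀ := by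
        intro x
        simp_rw [mul_assoc, ← Finset.mul_sum]
        rw [havg (fun y => -Real.log (α y)) (hαcls' id) x]
      simp_rw [this, ← Finset.sum_mul, hP1, one_mul]
    rw [hfirst]
    have hsecond : ∑ x, ∑ y, P x * W x y * Real.log (q y / A y)
        = ∑ y, A y * Real.log (q y / A y) := by
      rw [Finset.sum_comm]
      refine Finset.sum_congr rfl fun y _ => ?_
      simp only [hA]
      rw [Finset.sum_mul]
    rw [hsecond]
    have hbound : ∑ y, A y * Real.log (q y / A y) ≤ ∑ y, (q y - A y) := by
      refine Finset.sum_le_sum fun y _ => ?_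
      rcases eq_or_lt_of_le (hA0 y) with h0 | hpos
      · rw [← h0]; simp [le_of_lt (hqpos y)]
      · have h1 : Real.log (q y / A y) ≤ q y / A y - 1 :=
          Real.log_le_sub_one_of_pos (div_pos (hqpos y) hpos)
        calc A y * Real.log (q y / A y) ≤ A y * (q y / A y - 1) :=
              mul_le_mul_of_nonneg_left h1 (le_of_lt hpos)
          _ = q y - A y := by field_simp
    have hqsum : ∑ y, q y = 1 := by
      simp_rw [hq]
      rw [Finset.sum_comm]
      simp_rw [← Finset.mul_sum, hW1]
      rw [Finset.sum_const, card_univ, nsmul_eq_mul, mul_one]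
      field_simp
    have hAsum : ∑ y, A y = 1 := by
      simp only [hA]
      rw [Finset.sum_comm]
      simp_rw [← Finset.mul_sum, hW1, mul_one]
      exact hP1
    have : ∑ y, (q y - A y) = 0 := by
      rw [Finset.sum_sub_distrib, hqsum, hAsum, sub_self]
    linarith
  have hcap : capacity W = C₀ := by
    unfold capacity
    exact IsGreatest.csSup_eq ⟨hmem, hub⟩
  refine ⟨hcap.symm, ?_, ?_⟩
  · -- variance
    have e1 : ∑ y, W x₀ y * (Real.log (W x₀ y / q y)) ^ 2
        = ∑ y, q y * (Real.log (α y)) ^ 2 := by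
      rw [hterm (fun t => t ^ 2) x₀,
        havg (fun y => (-Real.log (α y)) ^ 2) (hαcls' (fun t => t ^ 2)) x₀]
      simp_rw [neg_sq]
    have e2 : ∑ y, W x₀ y * Real.log (W x₀ y / q y)
        = -∑ y, q y * Real.log (α y) := by
      rw [hterm (fun t => t) x₀,
        havg (fun y => -Real.log (α y)) (hαcls' id) x₀]
      simp_rw [mul_neg]
      rw [Finset.sum_neg_distrib]
    rw [e1, e2]
    ring
  · -- third absolute moment
    rw [hterm (fun t => |t - capacity W| ^ 3) x₀,
      havg (fun y => |(-Real.log (α y)) - capacity W| ^ 3)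
        (hαcls' (fun t => |t - capacity W| ^ 3)) x₀]
end

section
/- Fix a channel W with C(W) > 0, ε ∈ (0,1), δ > 0, and let γ(δ) := C(W) − max{I(Q;W) : Q ∈ closure of S₃(δ)} > 0, where S₃(δ) = {P : min_{P* : I(P*;W)=C(W)} ‖P − P*‖₂ > δ}. Let V_max := max_P V(P,W). Then there exists n₀ ∈ ℤ⁺ (depending on W, ε, δ) such that for all n ≥ n₀, every constant composition code of length n, rate Rₙ = C(W) + √(V_ε(W)/n)·Φ⁻¹(ε), and common composition Qₙ ∈ S₃(δ) has average error probability strictly greater than ε. Quantitatively, it suffices that 1 − e^{−n[γ(δ)/2 + √(V_ε(W)/n)Φ⁻¹(ε)]} − 4V_max/(n γ(δ)²) > ε. -/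
open Finset

/-- The probability simplex on a finite alphabet. -/
def probSimplex (X : Type*) [Fintype X] : Set (X → ℝ) :=
  {P | (∀ x, 0 ≤ P x) ∧ ∑ x, P x = 1}

/-- The conditional information variance `V(Q,W)`. -/
noncomputable def condInfoVar {X Y : Type*} [Fintype X] [Fintype Y]
    (Q : X → ℝ) (W : X → Y → ℝ) : ℝ :=
  ∑ x, ∑ y, Q x * W x y *
    (Real.log (W x y / ∑ z, Q z * W z y)
      - ∑ b, W x b * Real.log (W x b / ∑ z, Q z * W z b)) ^ 2

/-- The set of capacity-achieving input distributions. -/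
noncomputable def capAchievers {X Y : Type*} [Fintype X] [Fintype Y]
    (W : X → Y → ℝ) : Set (X → ℝ) :=
  {P | P ∈ probSimplex X ∧ mutualInfo P W = capacity W}

/-- The `ε`-dispersion `V_ε(W)`. -/
noncomputable def epsDispersion {X Y : Type*} [Fintype X] [Fintype Y]
    (ε : ℝ) (W : X → Y → ℝ) : ℝ :=
  if ε < 1 / 2 then sInf {v : ℝ | ∃ P ∈ capAchievers W, v = condInfoVar P W}
  else sSup {v : ℝ | ∃ P ∈ capAchievers W, v = condInfoVar P W}

/-- The `ℓ₂` distance between two input distributions. -/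
noncomputable def l2dist {X : Type*} [Fintype X] (P Q : X → ℝ) : ℝ :=
  Real.sqrt (∑ x, (P x - Q x) ^ 2)

/-- The set `S₃(δ)` of distributions `ℓ₂`-far from every capacity achiever. -/
noncomputable def farSet {X Y : Type*} [Fintype X] [Fintype Y]
    (W : X → Y → ℝ) (δ : ℝ) : Set (X → ℝ) :=
  {P | P ∈ probSimplex X ∧
    δ < sInf {d : ℝ | ∃ P' ∈ capAchievers W, d = l2dist P P'}}

/-- Average error probability of a code with codewords `cw` and decoding regions `A`. -/
noncomputable def avgErr {X Y : Type*} [Fintype X] [Fintype Y] [DecidableEq Y]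
    (W : X → Y → ℝ) (n M : ℕ)
    (cw : Fin M → Fin n → X) (A : Fin M → Finset (Fin n → Y)) : ℝ :=
  (M : ℝ)⁻¹ * ∑ m, ∑ yn ∈ (A m)ᶜ, ∏ i, W (cw m i) (yn i)

/-- The decoding regions are disjoint and cover the output space. -/
def isDecoder {Y : Type*} [Fintype Y] [DecidableEq Y]
    (n M : ℕ) (A : Fin M → Finset (Fin n → Y)) : Prop :=
  (∀ m m', m ≠ m' → Disjoint (A m) (A m')) ∧ ∀ yn : Fin n → Y, ∃ m, yn ∈ A m

/-- All codewords have empirical composition (type) `Q`. -/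
def hasComposition {X : Type*} [Fintype X] [DecidableEq X]
    (n M : ℕ) (cw : Fin M → Fin n → X) (Q : X → ℝ) : Prop :=
  ∀ (m : Fin M) (a : X),
    ((Finset.univ.filter (fun i => cw m i = a)).card : ℝ) = n * Q a

/-- Standard normal density. -/
noncomputable def normalPDF (t : ℝ) : ℝ :=
  Real.exp (-t ^ 2 / 2) / Real.sqrt (2 * Real.pi)

/-- Standard normal distribution function. -/
noncomputable def normalCDF (t : ℝ) : ℝ := ∫ s in Set.Iic t, normalPDF s


section helpers
variable {Y : Type*} [Fintype Y] {n : ℕ} {w : Fin n → Y → ℝ}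

lemma sumProd (u : Fin n → Y → ℝ) :
    ∑ y : Fin n → Y, ∏ i, u i (y i) = ∏ i, ∑ b, u i b := (Fintype.prod_sum u).symm

lemma probNorm (hw : ∀ i, ∑ b, w i b = 1) :
    ∑ y : Fin n → Y, ∏ i, w i (y i) = 1 := by
  rw [sumProd]; simp [hw]

lemma probMean (hw : ∀ i, ∑ b, w i b = 1) (i0 : Fin n) (h : Y → ℝ) :
    ∑ y : Fin n → Y, (∏ i, w i (y i)) * h (y i0) = ∑ b, w i0 b * h b := by
  have key : ∀ y : Fin n → Y,
      (∏ i, w i (y i)) * h (y i0)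
        = ∏ i, (fun j b => w j b * (if j = i0 then h b else 1)) i (y i) := by
    intro y
    simp only
    rw [Finset.prod_mul_distrib, Finset.prod_ite_eq' univ i0 (fun i => h (y i))]
    simp
  simp_rw [key]
  rw [sumProd (fun j b => w j b * (if j = i0 then h b else 1))]
  have step : ∀ i : Fin n, ∑ b, w i b * (if i = i0 then h b else 1)
      = if i = i0 then ∑ b, w i0 b * h b else 1 := by
    intro i
    by_cases hi : i = i0 <;> simp [hi, hw]
  simp_rw [step]
  rw [Finset.prod_ite_eq' univ i0 (fun _ => ∑ b, w i0 b * h b)]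
  simp

lemma probCross (hw : ∀ i, ∑ b, w i b = 1) (i0 i1 : Fin n) (hne : i0 ≠ i1) (h0 h1 : Y → ℝ) :
    ∑ y : Fin n → Y, (∏ i, w i (y i)) * (h0 (y i0) * h1 (y i1))
      = (∑ b, w i0 b * h0 b) * (∑ b, w i1 b * h1 b) := by
  have key : ∀ y : Fin n → Y,
      (∏ i, w i (y i)) * (h0 (y i0) * h1 (y i1))
        = ∏ i, (fun j b => w j b * ((if j = i0 then h0 b else 1) * (if j = i1 then h1 b else 1))) i (y i) := by
    intro y
    simp only
    rw [Finset.prod_mul_distrib, Finset.prod_mul_distrib,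
      Finset.prod_ite_eq' univ i0 (fun i => h0 (y i)),
      Finset.prod_ite_eq' univ i1 (fun i => h1 (y i))]
    simp only [mem_univ, if_pos]
    try ring
  simp_rw [key]
  rw [sumProd (fun j b => w j b * ((if j = i0 then h0 b else 1) * (if j = i1 then h1 b else 1)))]
  have step : ∀ i : Fin n, ∑ b, w i b * ((if i = i0 then h0 b else 1) * (if i = i1 then h1 b else 1))
      = if i = i0 then ∑ b, w i0 b * h0 b else if i = i1 then ∑ b, w i1 b * h1 b else 1 := by
    intro i
    by_cases hi : i = i0
    · subst hi; simp [hne]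
    · by_cases hi1 : i = i1
      · subst hi1; simp [hi]
      · simp [hi, hi1, hw]
  simp_rw [step]
  rw [← Finset.mul_prod_erase univ _ (mem_univ i0)]
  rw [if_pos rfl]
  have hi1mem : i1 ∈ univ.erase i0 := by simp [hne.symm]
  rw [← Finset.mul_prod_erase _ _ hi1mem]
  rw [if_neg (Ne.symm hne), if_pos rfl]
  rw [Finset.prod_eq_one, mul_one]
  intro i hi
  simp only [mem_erase, ne_eq] at hi
  rw [if_neg hi.2.1, if_neg hi.1]

lemma probVar (hw : ∀ i, ∑ b, w i b = 1) (h : Fin n → Y → ℝ)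
    (hmean : ∀ i, ∑ b, w i b * h i b = 0) :
    ∑ y : Fin n → Y, (∏ i, w i (y i)) * (∑ i, h i (y i)) ^ 2
      = ∑ i, ∑ b, w i b * (h i b) ^ 2 := by
  have expand : ∀ y : Fin n → Y, (∏ i, w i (y i)) * (∑ i, h i (y i)) ^ 2
      = ∑ i, ∑ j, (∏ k, w k (y k)) * (h i (y i) * h j (y j)) := by
    intro y
    rw [sq, Finset.sum_mul_sum]
    rw [Finset.mul_sum]
    refine Finset.sum_congr rfl fun i _ => ?_
    rw [Finset.mul_sum]
  simp_rw [expand]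
  rw [Finset.sum_comm]
  refine Finset.sum_congr rfl fun i _ => ?_
  rw [Finset.sum_comm]
  rw [Finset.sum_eq_single i]
  · have := probMean hw i (fun b => h i b * h i b)
    rw [this]
    refine Finset.sum_congr rfl fun b _ => by ring
  · intro j _ hj
    rw [probCross hw i j (Ne.symm hj) (h i) (h j), hmean i, zero_mul]
  · intro hi; exact absurd (mem_univ i) hi

end helpers

lemma ulog {u : ℝ} (h0 : 0 < u) (h1 : u ≤ 1) : u * (-Real.log u) ≤ 1 := by
  have h := Real.log_le_sub_one_of_pos (inv_pos.mpr h0)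
  rw [Real.log_inv] at h
  have := mul_inv_cancel₀ h0.ne'
  nlinarith

lemma slog2 {s : ℝ} (h0 : 0 < s) (h1 : s ≤ 1) : s * (Real.log s) ^ 2 ≤ 4 := by
  have hs0 : 0 < Real.sqrt s := Real.sqrt_pos.mpr h0
  have hs1 : Real.sqrt s ≤ 1 := by
    rw [show (1:ℝ) = Real.sqrt 1 by simp]; exact Real.sqrt_le_sqrt h1
  have h := ulog hs0 hs1
  have hlog : Real.log (Real.sqrt s) = Real.log s / 2 := Real.log_sqrt h0.le
  have hmul : Real.sqrt s * Real.sqrt s = s := Real.mul_self_sqrt h0.le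
  have hlneg : 0 ≤ -Real.log (Real.sqrt s) := by
    rw [neg_nonneg]; exact Real.log_nonpos hs0.le hs1
  have hsq : (Real.sqrt s * -Real.log (Real.sqrt s)) ^ 2 ≤ 1 := by
    rw [sq]
    exact mul_le_one₀ h (mul_nonneg hs0.le hlneg) h
  have e1 : (Real.sqrt s * -Real.log (Real.sqrt s)) ^ 2 = s * (Real.log s) ^ 2 / 4 := by
    have e2 : (Real.sqrt s * -Real.log (Real.sqrt s)) ^ 2
        = (Real.sqrt s * Real.sqrt s) * (Real.log (Real.sqrt s)) ^ 2 := by ring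
    rw [e2, hmul, hlog]; ring
  linarith

section aux
variable {X Y : Type*} [Fintype X] [Fintype Y] {W : X → Y → ℝ} {P : X → ℝ}

lemma Px_le_one (hP : P ∈ probSimplex X) (x : X) : P x ≤ 1 := by
  have := Finset.single_le_sum (fun i _ => hP.1 i) (mem_univ x)
  rw [hP.2] at this; exact this

lemma Wxy_le_one (hW0 : ∀ x y, 0 ≤ W x y) (hW1 : ∀ x, ∑ y, W x y = 1) (x : X) (y : Y) :
    W x y ≤ 1 := by
  have := Finset.single_le_sum (fun b _ => hW0 x b) (mem_univ y)
  rw [hW1 x] at this; exact this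

lemma q_nonneg (hW0 : ∀ x y, 0 ≤ W x y) (hP : P ∈ probSimplex X) (y : Y) :
    0 ≤ ∑ z, P z * W z y :=
  Finset.sum_nonneg fun z _ => mul_nonneg (hP.1 z) (hW0 z y)

lemma q_ge (hW0 : ∀ x y, 0 ≤ W x y) (hP : P ∈ probSimplex X) (x : X) (y : Y) :
    P x * W x y ≤ ∑ z, P z * W z y :=
  Finset.single_le_sum (fun z _ => mul_nonneg (hP.1 z) (hW0 z y)) (mem_univ x)

lemma q_le_one (hW0 : ∀ x y, 0 ≤ W x y) (hW1 : ∀ x, ∑ y, W x y = 1)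
    (hP : P ∈ probSimplex X) (y : Y) : ∑ z, P z * W z y ≤ 1 := by
  calc ∑ z, P z * W z y ≤ ∑ z, P z := by
        refine Finset.sum_le_sum fun z _ => ?_
        nlinarith [hP.1 z, Wxy_le_one hW0 hW1 z y, hW0 z y]
    _ = 1 := hP.2

lemma q_sum_one (hW1 : ∀ x, ∑ y, W x y = 1) (hP : P ∈ probSimplex X) :
    ∑ y, ∑ z, P z * W z y = 1 := by
  rw [Finset.sum_comm]
  simp_rw [← Finset.mul_sum, hW1, mul_one]
  exact hP.2

/-- pointwise bound for the squared log term -/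
lemma alem (hW0 : ∀ x y, 0 ≤ W x y) (hW1 : ∀ x, ∑ y, W x y = 1)
    (hP : P ∈ probSimplex X) (x : X) (y : Y) :
    P x * W x y * (Real.log (W x y / ∑ z, P z * W z y)) ^ 2 ≤ 4 := by
  rcases (hP.1 x).eq_or_lt with h | hPx
  · rw [← h]; norm_num
  rcases (hW0 x y).eq_or_lt with h | hWxy
  · rw [← h]; norm_num
  have hq : 0 < ∑ z, P z * W z y := lt_of_lt_of_le (mul_pos hPx hWxy) (q_ge hW0 hP x y)
  set q := ∑ z, P z * W z y with hqdef
  set r := W x y / q with hrdef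
  have hr : 0 < r := div_pos hWxy hq
  have hqr : q * r = W x y := by rw [hrdef]; exact mul_div_cancel₀ _ hq.ne'
  by_cases hr1 : r ≤ 1
  · have h4 := slog2 hr hr1
    have heq : P x * W x y * (Real.log r) ^ 2 = P x * q * (r * (Real.log r) ^ 2) := by
      linear_combination (-(P x * (Real.log r) ^ 2)) * hqr
    rw [heq]
    have hq1 : q ≤ 1 := q_le_one hW0 hW1 hP y
    have hpq : P x * q ≤ 1 := mul_le_one₀ (Px_le_one hP x) hq.le hq1
    have hrl2 : 0 ≤ r * (Real.log r) ^ 2 := mul_nonneg hr.le (sq_nonneg _)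
    calc P x * q * (r * (Real.log r) ^ 2) ≤ 1 * 4 :=
          mul_le_mul hpq h4 hrl2 zero_le_one
      _ = 4 := by norm_num
  · push_neg at hr1
    have hrle : r ≤ (P x)⁻¹ := by
      rw [hrdef, div_le_iff₀ hq]
      rw [inv_mul_eq_div, le_div_iff₀ hPx]
      calc W x y * P x = P x * W x y := by ring
        _ ≤ q := q_ge hW0 hP x y
    have hlogr : Real.log r ≤ -Real.log (P x) := by
      rw [← Real.log_inv]
      exact Real.log_le_log hr hrle
    have h0logr : 0 ≤ Real.log r := Real.log_nonneg hr1.le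
    have hsq : (Real.log r) ^ 2 ≤ (Real.log (P x)) ^ 2 := by
      have h := pow_le_pow_left₀ h0logr hlogr 2
      calc (Real.log r) ^ 2 ≤ (-Real.log (P x)) ^ 2 := h
        _ = (Real.log (P x)) ^ 2 := by ring
    have h4 := slog2 hPx (Px_le_one hP x)
    have hwle := Wxy_le_one hW0 hW1 x y
    calc P x * W x y * (Real.log r) ^ 2
        = (P x * (Real.log r) ^ 2) * W x y := by ring
      _ ≤ P x * (Real.log r) ^ 2 :=
          mul_le_of_le_one_right (mul_nonneg hPx.le (sq_nonneg _)) hwle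
      _ ≤ P x * (Real.log (P x)) ^ 2 := mul_le_mul_of_nonneg_left hsq hPx.le
      _ ≤ 4 := h4

/-- pointwise bound for the mutual information term -/
lemma ilem (hW0 : ∀ x y, 0 ≤ W x y) (hW1 : ∀ x, ∑ y, W x y = 1)
    (hP : P ∈ probSimplex X) (x : X) (y : Y) :
    P x * W x y * Real.log (W x y / ∑ z, P z * W z y) ≤ 1 := by
  rcases (hP.1 x).eq_or_lt with h | hPx
  · rw [← h]; norm_num
  rcases (hW0 x y).eq_or_lt with h | hWxy
  · rw [← h]; norm_num
  have hq : 0 < ∑ z, P z * W z y := lt_of_lt_of_le (mul_pos hPx hWxy) (q_ge hW0 hP x y)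
  set q := ∑ z, P z * W z y with hqdef
  set r := W x y / q with hrdef
  have hr : 0 < r := div_pos hWxy hq
  by_cases hr1 : r ≤ 1
  · have hl : Real.log r ≤ 0 := Real.log_nonpos hr.le hr1
    have := mul_nonneg (mul_pos hPx hWxy).le (neg_nonneg.mpr hl)
    nlinarith
  · push_neg at hr1
    have hrle : r ≤ (P x)⁻¹ := by
      rw [hrdef, div_le_iff₀ hq, inv_mul_eq_div, le_div_iff₀ hPx]
      calc W x y * P x = P x * W x y := by ring
        _ ≤ q := q_ge hW0 hP x y
    have hlogr : Real.log r ≤ -Real.log (P x) := by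
      rw [← Real.log_inv]; exact Real.log_le_log hr hrle
    have hu := ulog hPx (Px_le_one hP x)
    have hwle := Wxy_le_one hW0 hW1 x y
    have h0logr : 0 ≤ Real.log r := Real.log_nonneg hr1.le
    calc P x * W x y * Real.log r
        = (P x * Real.log r) * W x y := by ring
      _ ≤ P x * Real.log r :=
          mul_le_of_le_one_right (mul_nonneg hPx.le h0logr) hwle
      _ ≤ P x * -Real.log (P x) := mul_le_mul_of_nonneg_left hlogr hPx.le
      _ ≤ 1 := hu

lemma mutualInfo_le (hW0 : ∀ x y, 0 ≤ W x y) (hW1 : ∀ x, ∑ y, W x y = 1)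
    (hP : P ∈ probSimplex X) :
    mutualInfo P W ≤ (Fintype.card X : ℝ) * (Fintype.card Y) := by
  unfold mutualInfo
  calc ∑ x, ∑ y, P x * W x y * Real.log (W x y / ∑ z, P z * W z y)
      ≤ ∑ _x : X, ∑ _y : Y, (1:ℝ) := by
        refine Finset.sum_le_sum fun x _ => Finset.sum_le_sum fun y _ => ?_
        exact ilem hW0 hW1 hP x y
    _ = (Fintype.card X : ℝ) * (Fintype.card Y) := by
        simp [Finset.card_univ, mul_comm]

lemma condInfoVar_nonneg (hW0 : ∀ x y, 0 ≤ W x y) (hP : P ∈ probSimplex X) :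
    0 ≤ condInfoVar P W := by
  unfold condInfoVar
  refine Finset.sum_nonneg fun x _ => Finset.sum_nonneg fun y _ => ?_
  exact mul_nonneg (mul_nonneg (hP.1 x) (hW0 x y)) (sq_nonneg _)

lemma jensen_sq (hW0 : ∀ x y, 0 ≤ W x y) (hW1 : ∀ x, ∑ y, W x y = 1) (x : X) (a : Y → ℝ) :
    (∑ b, W x b * a b) ^ 2 ≤ ∑ b, W x b * (a b) ^ 2 := by
  have := Finset.sum_mul_sq_le_sq_mul_sq univ (fun b => Real.sqrt (W x b))
    (fun b => Real.sqrt (W x b) * a b)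
  have h1 : ∀ b, Real.sqrt (W x b) * (Real.sqrt (W x b) * a b) = W x b * a b := by
    intro b
    rw [← mul_assoc, Real.mul_self_sqrt (hW0 x b)]
  have h2 : ∀ b, (Real.sqrt (W x b)) ^ 2 = W x b := fun b => Real.sq_sqrt (hW0 x b)
  have h3 : ∀ b, (Real.sqrt (W x b) * a b) ^ 2 = W x b * (a b) ^ 2 := by
    intro b; rw [mul_pow, h2]
  simp_rw [h1, h2, h3, hW1 x, one_mul] at this
  exact this

lemma condInfoVar_le (hW0 : ∀ x y, 0 ≤ W x y) (hW1 : ∀ x, ∑ y, W x y = 1)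
    (hP : P ∈ probSimplex X) :
    condInfoVar P W ≤ (Fintype.card X : ℝ) * (Fintype.card Y) * (8 + 8 * (Fintype.card Y)) := by
  unfold condInfoVar
  have key : ∀ x y, P x * W x y *
      (Real.log (W x y / ∑ z, P z * W z y)
        - ∑ b, W x b * Real.log (W x b / ∑ z, P z * W z b)) ^ 2
      ≤ 8 + 8 * (Fintype.card Y : ℝ) := by
    intro x y
    set a : Y → ℝ := fun b => Real.log (W x b / ∑ z, P z * W z b) with ha
    set B : ℝ := ∑ b, W x b * a b with hB
    have hsplit : (a y - B) ^ 2 ≤ 2 * (a y) ^ 2 + 2 * B ^ 2 := by nlinarith [sq_nonneg (a y + B)]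
    have hPW : 0 ≤ P x * W x y := mul_nonneg (hP.1 x) (hW0 x y)
    have h1 : P x * W x y * (a y) ^ 2 ≤ 4 := alem hW0 hW1 hP x y
    have h2 : P x * W x y * B ^ 2 ≤ 4 * (Fintype.card Y : ℝ) := by
      have hj : B ^ 2 ≤ ∑ b, W x b * (a b) ^ 2 := jensen_sq hW0 hW1 x a
      have hPB : P x * B ^ 2 ≤ ∑ b, P x * (W x b * (a b) ^ 2) := by
        calc P x * B ^ 2 ≤ P x * ∑ b, W x b * (a b) ^ 2 :=
              mul_le_mul_of_nonneg_left hj (hP.1 x)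
          _ = ∑ b, P x * (W x b * (a b) ^ 2) := Finset.mul_sum _ _ _
      have hsum : ∑ b, P x * (W x b * (a b) ^ 2) ≤ ∑ _b : Y, (4:ℝ) := by
        refine Finset.sum_le_sum fun b _ => ?_
        have := alem hW0 hW1 hP x b
        calc P x * (W x b * (a b) ^ 2) = P x * W x b * (a b) ^ 2 := by ring
          _ ≤ 4 := this
      have hc : (∑ _b : Y, (4:ℝ)) = 4 * (Fintype.card Y : ℝ) := by
        simp [Finset.card_univ, mul_comm]
      have hW1y := Wxy_le_one hW0 hW1 x y
      have hB2 : 0 ≤ B ^ 2 := sq_nonneg B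
      have hPx0 := hP.1 x
      have hchain : P x * B ^ 2 ≤ 4 * (Fintype.card Y : ℝ) := by
        calc P x * B ^ 2 ≤ ∑ b, P x * (W x b * (a b) ^ 2) := hPB
          _ ≤ ∑ _b : Y, (4:ℝ) := hsum
          _ = 4 * (Fintype.card Y : ℝ) := hc
      calc P x * W x y * B ^ 2 = (P x * B ^ 2) * W x y := by ring
        _ ≤ P x * B ^ 2 := mul_le_of_le_one_right (mul_nonneg hPx0 hB2) hW1y
        _ ≤ 4 * (Fintype.card Y : ℝ) := hchain
    have hm := mul_le_mul_of_nonneg_left hsplit hPW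
    nlinarith [hm]
  calc ∑ x, ∑ y, P x * W x y * (Real.log (W x y / ∑ z, P z * W z y)
        - ∑ b, W x b * Real.log (W x b / ∑ z, P z * W z b)) ^ 2
      ≤ ∑ _x : X, ∑ _y : Y, (8 + 8 * (Fintype.card Y : ℝ)) := by
        exact Finset.sum_le_sum fun x _ => Finset.sum_le_sum fun y _ => key x y
    _ = (Fintype.card X : ℝ) * (Fintype.card Y) * (8 + 8 * (Fintype.card Y)) := by
        simp [Finset.card_univ]; ring

lemma isClosed_probSimplex : IsClosed (probSimplex X) := by
  have : probSimplex X = (⋂ x : X, {P : X → ℝ | 0 ≤ P x}) ∩ {P : X → ℝ | ∑ x, P x = 1} := by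
    ext P; simp [probSimplex, Set.mem_iInter]
  rw [this]
  exact IsClosed.inter (isClosed_iInter fun x =>
      isClosed_le continuous_const (continuous_apply x))
    (isClosed_eq (continuous_finset_sum _ fun x _ => continuous_apply x) continuous_const)

end aux
section main
variable {X Y : Type*} [Fintype X] [Fintype Y]

/-- output distribution -/
noncomputable def qq (W : X → Y → ℝ) (Q : X → ℝ) (b : Y) : ℝ := ∑ z, Q z * W z b
/-- information density -/
noncomputable def gg (W : X → Y → ℝ) (Q : X → ℝ) (a : X) (b : Y) : ℝ :=
  Real.log (W a b / qq W Q b)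
/-- conditional divergence -/
noncomputable def dd (W : X → Y → ℝ) (Q : X → ℝ) (a : X) : ℝ := ∑ b, W a b * gg W Q a b
/-- conditional variance summand -/
noncomputable def vv (W : X → Y → ℝ) (Q : X → ℝ) (a : X) : ℝ :=
  ∑ b, W a b * (gg W Q a b - dd W Q a) ^ 2

variable {W : X → Y → ℝ} {Q : X → ℝ}

lemma mutualInfo_eq : mutualInfo Q W = ∑ a, Q a * dd W Q a := by
  simp only [mutualInfo, dd, gg, qq, Finset.mul_sum]
  exact Finset.sum_congr rfl fun a _ => Finset.sum_congr rfl fun b _ => by ring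

lemma condInfoVar_eq : condInfoVar Q W = ∑ a, Q a * vv W Q a := by
  simp only [condInfoVar, vv, dd, gg, qq, Finset.mul_sum]
  exact Finset.sum_congr rfl fun a _ => Finset.sum_congr rfl fun b _ => by ring

lemma qq_nonneg (hW0 : ∀ x y, 0 ≤ W x y) (hQ : Q ∈ probSimplex X) (b : Y) : 0 ≤ qq W Q b :=
  Finset.sum_nonneg fun z _ => mul_nonneg (hQ.1 z) (hW0 z b)

lemma qq_ge (hW0 : ∀ x y, 0 ≤ W x y) (hQ : Q ∈ probSimplex X) (a : X) (b : Y) :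
    Q a * W a b ≤ qq W Q b :=
  Finset.single_le_sum (fun z _ => mul_nonneg (hQ.1 z) (hW0 z b)) (mem_univ a)

lemma qq_sum (hW1 : ∀ x, ∑ y, W x y = 1) (hQ : Q ∈ probSimplex X) : ∑ b, qq W Q b = 1 := by
  unfold qq
  rw [Finset.sum_comm]
  simp_rw [← Finset.mul_sum, hW1, mul_one]
  exact hQ.2

lemma gg_mean_zero (hW1 : ∀ x, ∑ y, W x y = 1) (a : X) :
    ∑ b, W a b * (gg W Q a b - dd W Q a) = 0 := by
  simp_rw [mul_sub]
  rw [Finset.sum_sub_distrib, ← Finset.sum_mul, hW1, one_mul]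
  exact sub_self _

lemma mainBound {X Y : Type*} [Fintype X] [Fintype Y] [DecidableEq X] [DecidableEq Y]
    (W : X → Y → ℝ) (hW0 : ∀ x y, 0 ≤ W x y) (hW1 : ∀ x, ∑ y, W x y = 1)
    (γ Vmax L E : ℝ) (hγpos : 0 < γ)
    (n M : ℕ) (hn : 0 < n) (hM : 0 < M)
    (cw : Fin M → Fin n → X) (A : Fin M → Finset (Fin n → Y)) (Qn : X → ℝ)
    (hdec : isDecoder n M A) (hcomp : hasComposition n M cw Qn) (hQn : Qn ∈ probSimplex X)
    (hVle : condInfoVar Qn W ≤ Vmax)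
    (hMge : Real.exp L ≤ (M : ℝ))
    (hIle : (n : ℝ) * mutualInfo Qn W + n * (γ / 2) - L ≤ -E) :
    1 - Real.exp (-E) - 4 * Vmax / (n * γ ^ 2) ≤ avgErr W n M cw A := by
  classical
  set V := condInfoVar Qn W with hV
  set I := mutualInfo Qn W with hImeq
  set θ : ℝ := n * I + n * (γ / 2) with hθ
  have hnR : (0:ℝ) < n := Nat.cast_pos.mpr hn
  have hMR : (0:ℝ) < M := Nat.cast_pos.mpr hM
  -- composition sum
  have comp_sum : ∀ (m : Fin M) (F : X → ℝ), ∑ i, F (cw m i) = n * ∑ a, Qn a * F a := by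
    intro m F
    rw [← Finset.sum_fiberwise' (univ : Finset (Fin n)) (cw m) F]
    rw [Finset.mul_sum]
    refine Finset.sum_congr rfl fun a _ => ?_
    rw [Finset.sum_const, nsmul_eq_mul, hcomp m a]
    ring
  -- positivity of composition at codeword letters
  have hQpos : ∀ (m : Fin M) (i : Fin n), 0 < Qn (cw m i) := by
    intro m i
    have hcard := hcomp m (cw m i)
    have h1 : (1:ℝ) ≤ ((univ.filter (fun j => cw m j = cw m i)).card : ℝ) := by
      have : i ∈ univ.filter (fun j => cw m j = cw m i) := by simp
      have := Finset.card_pos.mpr ⟨i, this⟩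
      exact_mod_cast this
    rw [hcard] at h1
    nlinarith
  -- nonnegativity of V
  have hV0 : 0 ≤ V := condInfoVar_nonneg hW0 hQn
  have hden : (0:ℝ) < n * γ ^ 2 := by positivity
  -- per-codeword quantities
  have key : ∀ m : Fin M,
      ∑ y ∈ A m, ∏ i, W (cw m i) (y i)
        ≤ 4 * V / (n * γ ^ 2) + Real.exp θ * ∑ y ∈ A m, ∏ i, qq W Qn (y i) := by
    intro m
    set p : (Fin n → Y) → ℝ := fun y => ∏ i, W (cw m i) (y i) with hp
    set f : (Fin n → Y) → ℝ := fun y => ∑ i, gg W Qn (cw m i) (y i) with hf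
    have hp0 : ∀ y, 0 ≤ p y := fun y => Finset.prod_nonneg fun i _ => hW0 _ _
    have hw1 : ∀ i : Fin n, ∑ b, W (cw m i) b = 1 := fun i => hW1 _
    -- mean of f
    have hmean : ∑ i, dd W Qn (cw m i) = n * I := by
      rw [comp_sum m (dd W Qn), hImeq, mutualInfo_eq]
    -- variance identity
    have hvar : ∑ y : Fin n → Y, p y * (f y - n * I) ^ 2 = n * V := by
      have hfd : ∀ y : Fin n → Y, f y - n * I
          = ∑ i, (fun i b => gg W Qn (cw m i) b - dd W Qn (cw m i)) i (y i) := by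
        intro y
        simp only [hf]
        rw [Finset.sum_sub_distrib, hmean]
      have := probVar (w := fun i => W (cw m i)) hw1
        (fun i b => gg W Qn (cw m i) b - dd W Qn (cw m i))
        (fun i => gg_mean_zero hW1 (cw m i))
      simp_rw [hfd]
      rw [this]
      have : ∀ i : Fin n, ∑ b, W (cw m i) b * (gg W Qn (cw m i) b - dd W Qn (cw m i)) ^ 2
          = vv W Qn (cw m i) := fun i => rfl
      simp_rw [this]
      rw [comp_sum m (vv W Qn), hV, condInfoVar_eq]
    -- Chebyshev
    have hcheb : ∑ y ∈ univ.filter (fun y => θ < f y), p y ≤ 4 * V / (n * γ ^ 2) := by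
      have ht : (0:ℝ) < n * (γ / 2) := by positivity
      have hstep : (n * (γ/2)) ^ 2 * ∑ y ∈ univ.filter (fun y => θ < f y), p y
          ≤ n * V := by
        rw [← hvar, Finset.mul_sum]
        calc ∑ y ∈ univ.filter (fun y => θ < f y), (n * (γ/2)) ^ 2 * p y
            ≤ ∑ y ∈ univ.filter (fun y => θ < f y), p y * (f y - n * I) ^ 2 := by
              refine Finset.sum_le_sum fun y hy => ?_
              rw [Finset.mem_filter] at hy
              have h1 : n * (γ/2) ≤ f y - n * I := by
                have := hy.2
                rw [hθ] at this
                linarith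
              have h2 : (n * (γ/2)) ^ 2 ≤ (f y - n * I) ^ 2 :=
                pow_le_pow_left₀ ht.le h1 2
              calc (n * (γ/2)) ^ 2 * p y ≤ (f y - n * I) ^ 2 * p y :=
                    mul_le_mul_of_nonneg_right h2 (hp0 y)
                _ = p y * (f y - n * I) ^ 2 := by ring
          _ ≤ ∑ y : Fin n → Y, p y * (f y - n * I) ^ 2 := by
              refine Finset.sum_le_sum_of_subset_of_nonneg (Finset.subset_univ _)
                fun y _ _ => mul_nonneg (hp0 y) (sq_nonneg _)
      have ht2 : (0:ℝ) < (n * (γ/2)) ^ 2 := by positivity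
      rw [← le_div_iff₀' ht2] at hstep
      calc ∑ y ∈ univ.filter (fun y => θ < f y), p y ≤ n * V / (n * (γ/2)) ^ 2 := hstep
        _ = 4 * V / (n * γ ^ 2) := by field_simp; ring
    -- change of measure
    have hcm : ∀ y : Fin n → Y, f y ≤ θ → p y ≤ Real.exp θ * ∏ i, qq W Qn (y i) := by
      intro y hfy
      by_cases hex : ∃ i, W (cw m i) (y i) = 0
      · obtain ⟨i, hi⟩ := hex
        have : p y = 0 := Finset.prod_eq_zero (mem_univ i) hi
        rw [this]
        have : 0 ≤ ∏ i, qq W Qn (y i) :=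
          Finset.prod_nonneg fun i _ => qq_nonneg hW0 hQn _
        positivity
      · push_neg at hex
        have hWpos : ∀ i, 0 < W (cw m i) (y i) :=
          fun i => lt_of_le_of_ne (hW0 _ _) (Ne.symm (hex i))
        have hqpos : ∀ i, 0 < qq W Qn (y i) := fun i =>
          lt_of_lt_of_le (mul_pos (hQpos m i) (hWpos i)) (qq_ge hW0 hQn _ _)
        have hpeq : p y = (∏ i, qq W Qn (y i)) * Real.exp (f y) := by
          rw [hf]
          simp only
          rw [Real.exp_sum, ← Finset.prod_mul_distrib]
          refine Finset.prod_congr rfl fun i _ => ?_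
          rw [gg, Real.exp_log (div_pos (hWpos i) (hqpos i))]
          rw [mul_div_assoc']
          exact (mul_div_cancel_left₀ _ (hqpos i).ne').symm
        rw [hpeq, mul_comm]
        exact mul_le_mul_of_nonneg_right (Real.exp_le_exp.mpr hfy)
          (Finset.prod_nonneg fun i _ => (hqpos i).le)
    -- split the sum over A m
    rw [← Finset.sum_filter_add_sum_filter_not (A m) (fun y => θ < f y) p]
    have part1 : ∑ y ∈ (A m).filter (fun y => θ < f y), p y ≤ 4 * V / (n * γ ^ 2) := by
      refine le_trans ?_ hcheb
      exact Finset.sum_le_sum_of_subset_of_nonneg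
        (Finset.filter_subset_filter _ (Finset.subset_univ _)) (fun y _ _ => hp0 y)
    have part2 : ∑ y ∈ (A m).filter (fun y => ¬ θ < f y), p y
        ≤ Real.exp θ * ∑ y ∈ A m, ∏ i, qq W Qn (y i) := by
      calc ∑ y ∈ (A m).filter (fun y => ¬ θ < f y), p y
          ≤ ∑ y ∈ (A m).filter (fun y => ¬ θ < f y), Real.exp θ * ∏ i, qq W Qn (y i) := by
            refine Finset.sum_le_sum fun y hy => ?_
            rw [Finset.mem_filter] at hy
            exact hcm y (not_lt.mp hy.2)
        _ = Real.exp θ * ∑ y ∈ (A m).filter (fun y => ¬ θ < f y), ∏ i, qq W Qn (y i) := by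
            rw [Finset.mul_sum]
        _ ≤ Real.exp θ * ∑ y ∈ A m, ∏ i, qq W Qn (y i) := by
            refine mul_le_mul_of_nonneg_left ?_ (Real.exp_nonneg θ)
            exact Finset.sum_le_sum_of_subset_of_nonneg (Finset.filter_subset _ _)
              (fun y _ _ => Finset.prod_nonneg fun i _ => qq_nonneg hW0 hQn _)
    linarith
  -- total q-mass of decoding regions
  have htot : ∑ m, ∑ y ∈ A m, ∏ i, qq W Qn (y i) ≤ 1 := by
    have hdisj : (↑(univ : Finset (Fin M)) : Set (Fin M)).PairwiseDisjoint A :=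
      fun m _ m' _ hne => hdec.1 m m' hne
    rw [← Finset.sum_biUnion hdisj]
    calc ∑ y ∈ univ.biUnion A, ∏ i, qq W Qn (y i)
        ≤ ∑ y : Fin n → Y, ∏ i, qq W Qn (y i) := by
          refine Finset.sum_le_sum_of_subset_of_nonneg (Finset.subset_univ _)
            fun y _ _ => Finset.prod_nonneg fun i _ => qq_nonneg hW0 hQn _
      _ = 1 := probNorm (w := fun _ => qq W Qn) (fun _ => qq_sum hW1 hQn)
  -- assemble
  have hpsum : ∀ m : Fin M, ∑ y : Fin n → Y, ∏ i, W (cw m i) (y i) = 1 :=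
    fun m => probNorm (w := fun i => W (cw m i)) (fun i => hW1 _)
  have hcompl : ∀ m : Fin M, ∑ y ∈ (A m)ᶜ, ∏ i, W (cw m i) (y i)
      = 1 - ∑ y ∈ A m, ∏ i, W (cw m i) (y i) := by
    intro m
    have := Finset.sum_compl_add_sum (A m) (fun y => ∏ i, W (cw m i) (y i))
    rw [hpsum m] at this
    linarith
  have havg : avgErr W n M cw A
      = 1 - (M:ℝ)⁻¹ * ∑ m, ∑ y ∈ A m, ∏ i, W (cw m i) (y i) := by
    unfold avgErr
    simp_rw [hcompl]
    rw [Finset.sum_sub_distrib, Finset.sum_const, Finset.card_univ, Fintype.card_fin,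
      nsmul_eq_mul, mul_one, mul_sub, inv_mul_cancel₀ hMR.ne']
  have hsum_le : ∑ m, ∑ y ∈ A m, ∏ i, W (cw m i) (y i)
      ≤ M * (4 * V / (n * γ ^ 2)) + Real.exp θ := by
    calc ∑ m, ∑ y ∈ A m, ∏ i, W (cw m i) (y i)
        ≤ ∑ m : Fin M, (4 * V / (n * γ ^ 2) + Real.exp θ * ∑ y ∈ A m, ∏ i, qq W Qn (y i)) :=
          Finset.sum_le_sum fun m _ => key m
      _ = M * (4 * V / (n * γ ^ 2)) + Real.exp θ * ∑ m, ∑ y ∈ A m, ∏ i, qq W Qn (y i) := by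
          rw [Finset.sum_add_distrib, Finset.sum_const, Finset.card_univ, Fintype.card_fin,
            nsmul_eq_mul, ← Finset.mul_sum]
      _ ≤ M * (4 * V / (n * γ ^ 2)) + Real.exp θ * 1 := by
          have := mul_le_mul_of_nonneg_left htot (Real.exp_nonneg θ)
          linarith
      _ = M * (4 * V / (n * γ ^ 2)) + Real.exp θ := by ring
  have hfinal : 1 - 4 * V / (n * γ ^ 2) - Real.exp θ / M ≤ avgErr W n M cw A := by
    rw [havg]
    have h1 : (M:ℝ)⁻¹ * ∑ m, ∑ y ∈ A m, ∏ i, W (cw m i) (y i)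
        ≤ (M:ℝ)⁻¹ * (M * (4 * V / (n * γ ^ 2)) + Real.exp θ) :=
      mul_le_mul_of_nonneg_left hsum_le (by positivity)
    have h2 : (M:ℝ)⁻¹ * (M * (4 * V / (n * γ ^ 2)) + Real.exp θ)
        = 4 * V / (n * γ ^ 2) + Real.exp θ / M := by
      field_simp
    rw [h2] at h1
    linarith
  -- compare with the stated bound
  have hVV : 4 * V / (n * γ ^ 2) ≤ 4 * Vmax / (n * γ ^ 2) := by
    gcongr
  have hexp : Real.exp θ / M ≤ Real.exp (-E) := by
    have h1 : Real.exp θ / M ≤ Real.exp θ / Real.exp L := by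
      gcongr
    rw [← Real.exp_sub] at h1
    calc Real.exp θ / M ≤ Real.exp (θ - L) := h1
      _ ≤ Real.exp (-E) := Real.exp_le_exp.mpr hIle
  linarith [hfinal, hVV, hexp]

end main

theorem stmt12 {X Y : Type*} [Fintype X] [Fintype Y] [DecidableEq X] [DecidableEq Y]
    [Nonempty X] [Nonempty Y]
    (W : X → Y → ℝ) (hW0 : ∀ x y, 0 ≤ W x y) (hW1 : ∀ x, ∑ y, W x y = 1)
    (hC : 0 < capacity W)
    (ε : ℝ) (hε : ε ∈ Set.Ioo (0 : ℝ) 1) (δ : ℝ) (hδ : 0 < δ)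
    (γ : ℝ)
    (hγdef : γ = capacity W -
      sSup {v : ℝ | ∃ Q ∈ closure (farSet W δ), v = mutualInfo Q W})
    (hγpos : 0 < γ)
    (Vmax : ℝ)
    (hVmax : Vmax = sSup {v : ℝ | ∃ Q ∈ probSimplex X, v = condInfoVar Q W})
    (Φinv : ℝ) (hΦ : normalCDF Φinv = ε) :
    (∃ n₀ : ℕ, ∀ n : ℕ, n₀ ≤ n → 0 < n →
      ∀ (M : ℕ), 0 < M →
        ∀ (cw : Fin M → Fin n → X) (A : Fin M → Finset (Fin n → Y)) (Qn : X → ℝ),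
          isDecoder n M A → hasComposition n M cw Qn → Qn ∈ farSet W δ →
          Real.exp (n * (capacity W +
            Real.sqrt (epsDispersion ε W / n) * Φinv)) ≤ (M : ℝ) →
          ε < avgErr W n M cw A) ∧
    (∀ n : ℕ, 0 < n →
      ε < 1 - Real.exp (-(n * (γ / 2) + Real.sqrt (n * epsDispersion ε W) * Φinv))
            - 4 * Vmax / (n * γ ^ 2) →
      ∀ (M : ℕ), 0 < M →
        ∀ (cw : Fin M → Fin n → X) (A : Fin M → Finset (Fin n → Y)) (Qn : X → ℝ),
          isDecoder n M A → hasComposition n M cw Qn → Qn ∈ farSet W δ →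
          Real.exp (n * (capacity W +
            Real.sqrt (epsDispersion ε W / n) * Φinv)) ≤ (M : ℝ) →
          ε < avgErr W n M cw A) := by
  obtain ⟨hε0, hε1⟩ := hε
  set D := epsDispersion ε W with hD
  have hD0 : 0 ≤ D := by
    rw [hD, epsDispersion]
    split_ifs
    · refine Real.sInf_nonneg ?_
      rintro v ⟨P, hP, rfl⟩
      exact condInfoVar_nonneg hW0 hP.1
    · refine Real.sSup_nonneg ?_
      rintro v ⟨P, hP, rfl⟩
      exact condInfoVar_nonneg hW0 hP.1
  have hVmax0 : 0 ≤ Vmax := by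
    rw [hVmax]
    refine Real.sSup_nonneg ?_
    rintro v ⟨Q, hQ, rfl⟩
    exact condInfoVar_nonneg hW0 hQ
  have hVle : ∀ Qn ∈ probSimplex X, condInfoVar Qn W ≤ Vmax := by
    intro Qn hQn
    rw [hVmax]
    refine le_csSup ⟨(Fintype.card X : ℝ) * (Fintype.card Y) * (8 + 8 * (Fintype.card Y)), ?_⟩
      ⟨Qn, hQn, rfl⟩
    rintro v ⟨Q, hQ, rfl⟩
    exact condInfoVar_le hW0 hW1 hQ
  have hclos : closure (farSet W δ) ⊆ probSimplex X := by
    have h1 : farSet W δ ⊆ probSimplex X := fun P hP => hP.1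
    calc closure (farSet W δ) ⊆ closure (probSimplex X) := closure_mono h1
      _ = probSimplex X := isClosed_probSimplex.closure_eq
  have hIle : ∀ Qn ∈ farSet W δ, mutualInfo Qn W ≤ capacity W - γ := by
    intro Qn hQn
    have hmem : mutualInfo Qn W ∈
        {v : ℝ | ∃ Q ∈ closure (farSet W δ), v = mutualInfo Q W} :=
      ⟨Qn, subset_closure hQn, rfl⟩
    have hbdd : BddAbove {v : ℝ | ∃ Q ∈ closure (farSet W δ), v = mutualInfo Q W} := by
      refine ⟨(Fintype.card X : ℝ) * (Fintype.card Y), ?_⟩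
      rintro v ⟨Q, hQ, rfl⟩
      exact mutualInfo_le hW0 hW1 (hclos hQ)
    have := le_csSup hbdd hmem
    linarith [this]
  -- the quantitative part
  have part2 : ∀ n : ℕ, 0 < n →
      ε < 1 - Real.exp (-(n * (γ / 2) + Real.sqrt (n * D) * Φinv))
            - 4 * Vmax / (n * γ ^ 2) →
      ∀ (M : ℕ), 0 < M →
        ∀ (cw : Fin M → Fin n → X) (A : Fin M → Finset (Fin n → Y)) (Qn : X → ℝ),
          isDecoder n M A → hasComposition n M cw Qn → Qn ∈ farSet W δ →
          Real.exp (n * (capacity W + Real.sqrt (D / n) * Φinv)) ≤ (M : ℝ) →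
          ε < avgErr W n M cw A := by
    intro n hn hlt M hM cw A Qn hdec hcomp hfar hMge
    have hQn : Qn ∈ probSimplex X := hfar.1
    have hnR : (0:ℝ) < n := Nat.cast_pos.mpr hn
    have hsq : (n:ℝ) * Real.sqrt (D / n) = Real.sqrt (n * D) := by
      have h2 : (n:ℝ) * D = (n:ℝ) ^ 2 * (D / n) := by field_simp
      rw [h2, Real.sqrt_mul (by positivity), Real.sqrt_sq hnR.le]
    have hIle' : (n:ℝ) * mutualInfo Qn W + n * (γ / 2)
        - n * (capacity W + Real.sqrt (D / n) * Φinv)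
        ≤ -((n:ℝ) * (γ / 2) + Real.sqrt (n * D) * Φinv) := by
      have h1 : mutualInfo Qn W ≤ capacity W - γ := hIle Qn hfar
      have h2 : (n:ℝ) * mutualInfo Qn W ≤ n * (capacity W - γ) :=
        mul_le_mul_of_nonneg_left h1 hnR.le
      have h3 : (n:ℝ) * (capacity W + Real.sqrt (D / n) * Φinv)
          = n * capacity W + Real.sqrt (n * D) * Φinv := by
        rw [mul_add, ← hsq]; ring
      rw [h3]
      linarith
    have := mainBound W hW0 hW1 γ Vmax
      ((n:ℝ) * (capacity W + Real.sqrt (D / n) * Φinv))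
      ((n:ℝ) * (γ / 2) + Real.sqrt (n * D) * Φinv)
      hγpos n M hn hM cw A Qn hdec hcomp hQn (hVle Qn hQn) hMge hIle'
    linarith
  constructor
  · -- existence of n₀
    refine ⟨⌈16 * D * Φinv ^ 2 / γ ^ 2⌉₊ + ⌈4 / γ * Real.log (2 / (1 - ε))⌉₊
      + ⌈8 * Vmax / ((1 - ε) * γ ^ 2)⌉₊ + 1, ?_⟩
    intro n hn0 hn M hM cw A Qn hdec hcomp hfar hMge
    refine part2 n hn ?_ M hM cw A Qn hdec hcomp hfar hMge
    have h1ε : (0:ℝ) < 1 - ε := by linarith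
    have hnR : (0:ℝ) < n := Nat.cast_pos.mpr hn
    have hceil : ∀ c : ℝ, ⌈c⌉₊ < n → c < n := by
      intro c hc
      calc c ≤ (⌈c⌉₊ : ℝ) := Nat.le_ceil c
        _ < n := Nat.cast_lt.mpr hc
    have hc1 : 16 * D * Φinv ^ 2 / γ ^ 2 < n := hceil _ (by omega)
    have hc2 : 4 / γ * Real.log (2 / (1 - ε)) < n := hceil _ (by omega)
    have hc3 : 8 * Vmax / ((1 - ε) * γ ^ 2) < n := hceil _ (by omega)
    have h16 : 16 * D * Φinv ^ 2 ≤ (n:ℝ) * γ ^ 2 := by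
      rw [div_lt_iff₀ (by positivity)] at hc1
      linarith
    have hA : Real.sqrt ((n:ℝ) * D) * |Φinv| ≤ n * γ / 4 := by
      have he : Real.sqrt ((n:ℝ) * D * Φinv ^ 2) = Real.sqrt ((n:ℝ) * D) * |Φinv| := by
        rw [Real.sqrt_mul (show (0:ℝ) ≤ (n:ℝ) * D by positivity) (Φinv ^ 2),
          Real.sqrt_sq_eq_abs]
      rw [← he]
      have h2 : (n:ℝ) * D * Φinv ^ 2 ≤ ((n:ℝ) * γ / 4) ^ 2 := by nlinarith
      calc Real.sqrt ((n:ℝ) * D * Φinv ^ 2) ≤ Real.sqrt (((n:ℝ) * γ / 4) ^ 2) :=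
            Real.sqrt_le_sqrt h2
        _ = (n:ℝ) * γ / 4 := Real.sqrt_sq (by positivity)
    have hE : (n:ℝ) * γ / 4 ≤ n * (γ / 2) + Real.sqrt ((n:ℝ) * D) * Φinv := by
      have h5 : -(Real.sqrt ((n:ℝ) * D) * |Φinv|) ≤ Real.sqrt ((n:ℝ) * D) * Φinv := by
        have h6 := neg_abs_le (Real.sqrt ((n:ℝ) * D) * Φinv)
        rw [abs_mul, abs_of_nonneg (Real.sqrt_nonneg _)] at h6
        exact h6
      linarith
    have hexp : Real.exp (-((n:ℝ) * (γ / 2) + Real.sqrt ((n:ℝ) * D) * Φinv))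
        ≤ Real.exp (-((n:ℝ) * γ / 4)) := Real.exp_le_exp.mpr (by linarith)
    have hexp2 : Real.exp (-((n:ℝ) * γ / 4)) < (1 - ε) / 2 := by
      rw [← Real.exp_log (show (0:ℝ) < (1 - ε) / 2 by linarith)]
      refine Real.exp_lt_exp.mpr ?_
      have hlog : Real.log ((1 - ε) / 2) = -Real.log (2 / (1 - ε)) := by
        rw [← Real.log_inv, inv_div]
      rw [hlog]
      have h7 : Real.log (2 / (1 - ε)) < (n:ℝ) * γ / 4 := by
        have h8 : 4 / γ * Real.log (2 / (1 - ε)) < (n:ℝ) := hc2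
        rw [div_mul_eq_mul_div] at h8
        have h9 := (div_lt_iff₀ hγpos).mp h8
        linarith
      linarith
    have hterm : 4 * Vmax / ((n:ℝ) * γ ^ 2) < (1 - ε) / 2 := by
      rw [div_lt_iff₀ (by positivity)]
      rw [div_lt_iff₀ (by positivity)] at hc3
      nlinarith
    have hfin := hexp.trans_lt hexp2
    linarith
  · exact part2
end

section
/- Fix ε ∈ (1/2, 1), a channel W with V_ε(W) > 0, and a ∈ ℝ with a > 2/(1−ε). Let (f,φ) be an (n,Rₙ) constant composition code with Rₙ = C(W) + √(V_ε(W)/n)·Φ⁻¹(ε) − (1/n)·ln(1 − ε − 2/a) and common composition Q satisfying V(Q,W) < V_ε(W)·[Φ⁻¹(ε)]²/a. Then the average error probability of (f,φ) is strictly greater than ε; in fact, it is at least ε + 1/a. -/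
open Finset

lemma aux_sum_pi_prod {Y : Type*} [Fintype Y] {n : ℕ} (g : Fin n → Y → ℝ) :
    ∑ y : Fin n → Y, ∏ i, g i (y i) = ∏ i, ∑ t, g i t := by
  rw [Finset.prod_univ_sum, Fintype.piFinset_univ]

lemma aux_exp_one {Y : Type*} [Fintype Y] {n : ℕ} (w : Fin n → Y → ℝ)
    (hw : ∀ i, ∑ t, w i t = 1) (i : Fin n) (L : Y → ℝ) :
    ∑ y : Fin n → Y, (∏ j, w j (y j)) * L (y i) = ∑ t, w i t * L t := by
  have h1 : ∀ y : Fin n → Y, (∏ j, w j (y j)) * L (y i)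
      = ∏ j, (w j (y j) * if j = i then L (y j) else 1) := by
    intro y
    rw [Finset.prod_mul_distrib, Finset.prod_ite_eq' Finset.univ i (fun j => L (y j))]
    simp
  simp_rw [h1]
  rw [aux_sum_pi_prod (fun k t => w k t * if k = i then L t else 1)]
  have h2 : ∀ j, (∑ t, w j t * if j = i then L t else 1) = if j = i then ∑ t, w i t * L t else 1 := by
    intro j
    by_cases h : j = i
    · subst h; simp
    · simp [h, hw j]
  simp_rw [h2]
  rw [Finset.prod_ite_eq' Finset.univ i]
  simp

lemma aux_exp_two {Y : Type*} [Fintype Y] {n : ℕ} (w : Fin n → Y → ℝ)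
    (hw : ∀ i, ∑ t, w i t = 1) (i j : Fin n) (hij : i ≠ j) (Li Lj : Y → ℝ) :
    ∑ y : Fin n → Y, (∏ k, w k (y k)) * (Li (y i) * Lj (y j))
      = (∑ t, w i t * Li t) * (∑ t, w j t * Lj t) := by
  have h1 : ∀ y : Fin n → Y, (∏ k, w k (y k)) * (Li (y i) * Lj (y j))
      = ∏ k, (w k (y k) * if k = i then Li (y k) else if k = j then Lj (y k) else 1) := by
    intro y
    rw [Finset.prod_mul_distrib]
    congr 1
    rw [show (Li (y i) * Lj (y j)) = (if i = i then Li (y i) else if i = j then Lj (y i) else 1) *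
        (if j = i then Li (y j) else if j = j then Lj (y j) else 1) by simp [hij, hij.symm]]
    rw [← Finset.prod_subset (Finset.subset_univ {i, j})]
    · rw [Finset.prod_insert (by simp [hij]), Finset.prod_singleton]
    · intro k _ hk
      simp only [Finset.mem_insert, Finset.mem_singleton, not_or] at hk
      simp [hk.1, hk.2]
  simp_rw [h1]
  rw [aux_sum_pi_prod (fun k t => w k t * if k = i then Li t else if k = j then Lj t else 1)]
  have h2 : ∀ k, (∑ t, w k t * if k = i then Li t else if k = j then Lj t else 1)
      = if k = i then (∑ t, w i t * Li t) else if k = j then (∑ t, w j t * Lj t) else 1 := by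
    intro k
    by_cases h : k = i
    · subst h; simp
    · by_cases h' : k = j
      · subst h'; simp [h]
      · simp [h, h', hw k]
  simp_rw [h2]
  rw [show ((∑ t, w i t * Li t) * (∑ t, w j t * Lj t)) = (if i = i then (∑ t, w i t * Li t) else if i = j then (∑ t, w j t * Lj t) else 1) *
        (if j = i then (∑ t, w i t * Li t) else if j = j then (∑ t, w j t * Lj t) else 1) by simp [hij, hij.symm]]
  rw [← Finset.prod_subset (Finset.subset_univ {i, j})]
  · rw [Finset.prod_insert (by simp [hij]), Finset.prod_singleton]
  · intro k _ hk
    simp only [Finset.mem_insert, Finset.mem_singleton, not_or] at hk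
    simp [hk.1, hk.2]

lemma aux_meta {Ω : Type*} [Fintype Ω] [DecidableEq Ω] (μ ν : Ω → ℝ) (f : Ω → ℝ)
    (hμ0 : ∀ ω, 0 ≤ μ ω) (hν0 : ∀ ω, 0 ≤ ν ω)
    (E V γ : ℝ) (hE : ∑ ω, μ ω * f ω = E) (hV : ∑ ω, μ ω * (f ω - E) ^ 2 = V)
    (hγ : E < γ) (hcom : ∀ ω, f ω ≤ γ → μ ω ≤ Real.exp γ * ν ω) (S : Finset Ω) :
    ∑ ω ∈ S, μ ω ≤ V / (γ - E) ^ 2 + Real.exp γ * ∑ ω ∈ S, ν ω := by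
  classical
  have hsplit : ∑ ω ∈ S, μ ω
      = ∑ ω ∈ S.filter (fun ω => γ < f ω), μ ω + ∑ ω ∈ S.filter (fun ω => ¬ γ < f ω), μ ω :=
    (Finset.sum_filter_add_sum_filter_not S _ _).symm
  rw [hsplit]
  have hd2 : (0:ℝ) < (γ - E) ^ 2 := by nlinarith
  have h1 : ∑ ω ∈ S.filter (fun ω => γ < f ω), μ ω ≤ V / (γ - E) ^ 2 := by
    rw [le_div_iff₀ hd2]
    calc (∑ ω ∈ S.filter (fun ω => γ < f ω), μ ω) * (γ - E) ^ 2
        = ∑ ω ∈ S.filter (fun ω => γ < f ω), μ ω * (γ - E) ^ 2 := by rw [Finset.sum_mul]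
      _ ≤ ∑ ω ∈ S.filter (fun ω => γ < f ω), μ ω * (f ω - E) ^ 2 := by
          apply Finset.sum_le_sum
          intro ω hω
          have hfω : γ < f ω := (Finset.mem_filter.mp hω).2
          have : (γ - E) ^ 2 ≤ (f ω - E) ^ 2 := by
            apply sq_le_sq'
            · nlinarith
            · nlinarith
          exact mul_le_mul_of_nonneg_left this (hμ0 ω)
      _ ≤ ∑ ω, μ ω * (f ω - E) ^ 2 := by
          apply Finset.sum_le_sum_of_subset_of_nonneg (Finset.subset_univ _)
          intro ω _ _
          exact mul_nonneg (hμ0 ω) (sq_nonneg _)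
      _ = V := hV
  have h2 : ∑ ω ∈ S.filter (fun ω => ¬ γ < f ω), μ ω ≤ Real.exp γ * ∑ ω ∈ S, ν ω := by
    calc ∑ ω ∈ S.filter (fun ω => ¬ γ < f ω), μ ω
        ≤ ∑ ω ∈ S.filter (fun ω => ¬ γ < f ω), Real.exp γ * ν ω := by
          apply Finset.sum_le_sum
          intro ω hω
          exact hcom ω (not_lt.mp (Finset.mem_filter.mp hω).2)
      _ ≤ ∑ ω ∈ S, Real.exp γ * ν ω := by
          apply Finset.sum_le_sum_of_subset_of_nonneg (Finset.filter_subset _ _)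
          intro ω _ _
          exact mul_nonneg (Real.exp_nonneg γ) (hν0 ω)
      _ = Real.exp γ * ∑ ω ∈ S, ν ω := by rw [Finset.mul_sum]
  linarith

-- disjoint decoding regions: sum of ν-masses ≤ total
lemma aux_disj {Ω : Type*} [Fintype Ω] [DecidableEq Ω] {M : ℕ} (A : Fin M → Finset Ω)
    (hdisj : ∀ m m', m ≠ m' → Disjoint (A m) (A m')) (ν : Ω → ℝ) (hν0 : ∀ ω, 0 ≤ ν ω)
    (hν1 : ∑ ω, ν ω = 1) : ∑ m, ∑ ω ∈ A m, ν ω ≤ 1 := by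
  classical
  rw [← Finset.sum_biUnion (fun m _ m' _ h => hdisj m m' h)]
  rw [← hν1]
  exact Finset.sum_le_sum_of_subset_of_nonneg (Finset.subset_univ _) (fun ω _ _ => hν0 ω)

open MeasureTheory in
lemma aux_pdf_eq : normalPDF = fun s => Real.exp (-(1/2) * s ^ 2) / Real.sqrt (2 * Real.pi) := by
  funext s; unfold normalPDF; ring_nf

open MeasureTheory in
lemma aux_pdf_integrable : Integrable normalPDF := by
  rw [aux_pdf_eq]
  exact (integrable_exp_neg_mul_sq (by norm_num : (0:ℝ) < 1/2)).div_const _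

open MeasureTheory in
lemma aux_normalCDF_zero : normalCDF 0 = 1 / 2 := by
  have hg : Integrable (fun s : ℝ => Real.exp (-(1/2) * s ^ 2)) :=
    integrable_exp_neg_mul_sq (by norm_num)
  have hA : (∫ s in Set.Iic (0:ℝ), Real.exp (-(1/2) * s ^ 2))
      = ∫ s in Set.Ioi (0:ℝ), Real.exp (-(1/2) * s ^ 2) := by
    rw [← neg_zero, ← integral_comp_neg_Iic]
    norm_num
  have hB : (∫ s in Set.Iic (0:ℝ), Real.exp (-(1/2) * s ^ 2))
      + (∫ s in Set.Ioi (0:ℝ), Real.exp (-(1/2) * s ^ 2))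
      = ∫ s : ℝ, Real.exp (-(1/2) * s ^ 2) := by
    rw [← setIntegral_union (Set.Iic_disjoint_Ioi le_rfl) measurableSet_Ioi
      hg.integrableOn hg.integrableOn, Set.Iic_union_Ioi, setIntegral_univ]
  have htot : (∫ s : ℝ, Real.exp (-(1/2) * s ^ 2)) = Real.sqrt (2 * Real.pi) := by
    rw [integral_gaussian]
    congr 1
    ring
  have hhalf : (∫ s in Set.Iic (0:ℝ), Real.exp (-(1/2) * s ^ 2)) = Real.sqrt (2 * Real.pi) / 2 := by
    rw [← hA] at hB
    rw [htot] at hB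
    linarith
  have hpos : (0:ℝ) < Real.sqrt (2 * Real.pi) := Real.sqrt_pos.mpr (by positivity)
  unfold normalCDF
  rw [aux_pdf_eq]
  rw [integral_div, hhalf]
  field_simp

open MeasureTheory in
lemma aux_phinv_pos {ε Φinv : ℝ} (hε : 1/2 < ε) (hΦ : normalCDF Φinv = ε) : 0 < Φinv := by
  by_contra h
  push_neg at h
  have hmono : normalCDF Φinv ≤ normalCDF 0 := by
    unfold normalCDF
    apply setIntegral_mono_set aux_pdf_integrable.integrableOn
    · filter_upwards with s
      unfold normalPDF
      positivity
    · exact HasSubset.Subset.eventuallyLE (Set.Iic_subset_Iic.mpr h)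
  rw [hΦ, aux_normalCDF_zero] at hmono
  linarith

lemma aux_mi_le {X Y : Type*} [Fintype X] [Fintype Y] [Nonempty Y]
    (W : X → Y → ℝ) (hW0 : ∀ x y, 0 ≤ W x y) (hW1 : ∀ x, ∑ y, W x y = 1)
    (P : X → ℝ) (hP0 : ∀ x, 0 ≤ P x) (hP1 : ∑ x, P x = 1) :
    mutualInfo P W ≤ Real.log (Fintype.card Y) := by
  set PY : Y → ℝ := fun y => ∑ z, P z * W z y with hPY
  have hPY0 : ∀ y, 0 ≤ PY y := fun y =>
    Finset.sum_nonneg fun z _ => mul_nonneg (hP0 z) (hW0 z y)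
  have hPY1 : ∑ y, PY y = 1 := by
    rw [hPY]
    rw [Finset.sum_comm]
    simp_rw [← Finset.mul_sum, hW1, mul_one]
    exact hP1
  have hcard : (0:ℝ) < (Fintype.card Y : ℝ) := by
    exact_mod_cast Fintype.card_pos
  -- step 1 : mutualInfo ≤ ∑ y, PY y * (- log (PY y))
  have step1 : mutualInfo P W ≤ ∑ y, PY y * (- Real.log (PY y)) := by
    unfold mutualInfo
    rw [Finset.sum_comm]
    apply Finset.sum_le_sum
    intro y _
    have : ∑ x, P x * W x y * Real.log (W x y / PY y)
        ≤ ∑ x, P x * W x y * (- Real.log (PY y)) := by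
      apply Finset.sum_le_sum
      intro x _
      rcases eq_or_lt_of_le (mul_nonneg (hP0 x) (hW0 x y)) with h | h
      · rw [← h]; simp
      · have hWxy : 0 < W x y := by
          rcases (hW0 x y).lt_or_eq with h' | h'
          · exact h'
          · exfalso; rw [← h'] at h; simp at h
        have hW1' : W x y ≤ 1 := by
          rw [← hW1 x]
          exact Finset.single_le_sum (fun y' _ => hW0 x y') (Finset.mem_univ y)
        have hPYy : 0 < PY y := lt_of_lt_of_le h (Finset.single_le_sum
          (fun z _ => mul_nonneg (hP0 z) (hW0 z y)) (Finset.mem_univ x))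
        have : Real.log (W x y / PY y) ≤ - Real.log (PY y) := by
          rw [Real.log_div hWxy.ne' hPYy.ne']
          have := Real.log_nonpos (le_of_lt hWxy) hW1'
          linarith
        exact mul_le_mul_of_nonneg_left this (le_of_lt h)
    refine le_trans this (le_of_eq ?_)
    rw [← Finset.sum_mul]
  -- step 2 : entropy bound
  have step2 : ∑ y, PY y * (- Real.log (PY y)) ≤ Real.log (Fintype.card Y) := by
    have key : ∀ y, PY y * (- Real.log (PY y))
        ≤ 1 / (Fintype.card Y : ℝ) - PY y + PY y * Real.log (Fintype.card Y) := by
      intro y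
      rcases eq_or_lt_of_le (hPY0 y) with h | h
      · have hpos : (0:ℝ) ≤ 1 / (Fintype.card Y : ℝ) := by positivity
        rw [← h]; simpa using hpos
      · have h1 : PY y * Real.log ((1 / (Fintype.card Y : ℝ)) / PY y)
            ≤ PY y * ((1 / (Fintype.card Y : ℝ)) / PY y - 1) := by
          apply mul_le_mul_of_nonneg_left _ (le_of_lt h)
          exact Real.log_le_sub_one_of_pos (by positivity)
        have h2 : Real.log ((1 / (Fintype.card Y : ℝ)) / PY y)
            = - Real.log (Fintype.card Y) - Real.log (PY y) := by
          rw [Real.log_div (by positivity) h.ne', Real.log_div one_ne_zero hcard.ne',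
            Real.log_one]
          ring
        rw [h2] at h1
        have h3 : PY y * ((1 / (Fintype.card Y : ℝ)) / PY y - 1)
            = 1 / (Fintype.card Y : ℝ) - PY y := by
          field_simp
        rw [h3] at h1
        nlinarith [h1]
    calc ∑ y, PY y * (- Real.log (PY y))
        ≤ ∑ y, (1 / (Fintype.card Y : ℝ) - PY y + PY y * Real.log (Fintype.card Y)) :=
          Finset.sum_le_sum fun y _ => key y
      _ = Real.log (Fintype.card Y) := by
          rw [Finset.sum_add_distrib, Finset.sum_sub_distrib, ← Finset.sum_mul, hPY1,
            Finset.sum_const, Finset.card_univ]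
          rw [nsmul_eq_mul, mul_one_div_cancel hcard.ne']; ring
    
  exact le_trans step1 step2

lemma aux_bddAbove {X Y : Type*} [Fintype X] [Fintype Y] [Nonempty Y]
    (W : X → Y → ℝ) (hW0 : ∀ x y, 0 ≤ W x y) (hW1 : ∀ x, ∑ y, W x y = 1) :
    BddAbove {c : ℝ | ∃ P : X → ℝ, (∀ x, 0 ≤ P x) ∧ (∑ x, P x = 1) ∧ c = mutualInfo P W} := by
  refine ⟨Real.log (Fintype.card Y), ?_⟩
  rintro c ⟨P, hP0, hP1, rfl⟩
  exact aux_mi_le W hW0 hW1 P hP0 hP1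

lemma aux_cap_ge {X Y : Type*} [Fintype X] [Fintype Y] [Nonempty Y]
    (W : X → Y → ℝ) (hW0 : ∀ x y, 0 ≤ W x y) (hW1 : ∀ x, ∑ y, W x y = 1)
    (Q : X → ℝ) (hQ0 : ∀ x, 0 ≤ Q x) (hQ1 : ∑ x, Q x = 1) :
    mutualInfo Q W ≤ capacity W :=
  le_csSup (aux_bddAbove W hW0 hW1) ⟨Q, hQ0, hQ1, rfl⟩

section AuxDefs

/-- Output distribution induced by `Q` through `W`. -/
noncomputable def outDist {X Y : Type*} [Fintype X] (Q : X → ℝ) (W : X → Y → ℝ) (y : Y) : ℝ :=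
  ∑ z, Q z * W z y

/-- Information density. -/
noncomputable def infoDens {X Y : Type*} [Fintype X] (Q : X → ℝ) (W : X → Y → ℝ)
    (x : X) (y : Y) : ℝ := Real.log (W x y / outDist Q W y)

noncomputable def dKL {X Y : Type*} [Fintype X] [Fintype Y] (Q : X → ℝ) (W : X → Y → ℝ)
    (x : X) : ℝ := ∑ t, W x t * infoDens Q W x t

noncomputable def varX {X Y : Type*} [Fintype X] [Fintype Y] (Q : X → ℝ) (W : X → Y → ℝ)
    (x : X) : ℝ := ∑ t, W x t * (infoDens Q W x t - dKL Q W x) ^ 2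

lemma mutualInfo_eq_dKL {X Y : Type*} [Fintype X] [Fintype Y] (Q : X → ℝ) (W : X → Y → ℝ) :
    mutualInfo Q W = ∑ x, Q x * dKL Q W x := by
  unfold mutualInfo dKL infoDens outDist
  refine Finset.sum_congr rfl fun x _ => ?_
  rw [Finset.mul_sum]
  refine Finset.sum_congr rfl fun y _ => ?_
  ring

lemma condInfoVar_eq_varX {X Y : Type*} [Fintype X] [Fintype Y] (Q : X → ℝ) (W : X → Y → ℝ) :
    condInfoVar Q W = ∑ x, Q x * varX Q W x := by
  unfold condInfoVar varX dKL infoDens outDist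
  refine Finset.sum_congr rfl fun x _ => ?_
  rw [Finset.mul_sum]
  refine Finset.sum_congr rfl fun y _ => ?_
  ring

end AuxDefs

lemma aux_E_gen {Y : Type*} [Fintype Y] {n : ℕ} (w : Fin n → Y → ℝ)
    (hw : ∀ i, ∑ t, w i t = 1) (G : Fin n → Y → ℝ) :
    ∑ y : Fin n → Y, (∏ i, w i (y i)) * (∑ i, G i (y i)) = ∑ i, ∑ t, w i t * G i t := by
  simp_rw [Finset.mul_sum]
  rw [Finset.sum_comm]
  exact Finset.sum_congr rfl fun i _ => aux_exp_one w hw i (G i)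

lemma aux_V_gen {Y : Type*} [Fintype Y] {n : ℕ} (w : Fin n → Y → ℝ)
    (hw : ∀ i, ∑ t, w i t = 1) (G : Fin n → Y → ℝ)
    (hzero : ∀ i, ∑ t, w i t * G i t = 0) :
    ∑ y : Fin n → Y, (∏ i, w i (y i)) * (∑ i, G i (y i)) ^ 2
      = ∑ i, ∑ t, w i t * (G i t) ^ 2 := by
  have hsq : ∀ y : Fin n → Y, (∑ i, G i (y i)) ^ 2
      = ∑ i, ∑ j, G i (y i) * G j (y j) := by
    intro y
    rw [sq, Finset.sum_mul_sum]
  simp_rw [hsq, Finset.mul_sum]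
  rw [Finset.sum_comm]
  refine Finset.sum_congr rfl fun i _ => ?_
  rw [Finset.sum_comm]
  have : ∀ j, (∑ y : Fin n → Y, (∏ k, w k (y k)) * (G i (y i) * G j (y j)))
      = if j = i then ∑ t, w i t * (G i t) ^ 2 else 0 := by
    intro j
    by_cases h : j = i
    · subst h
      simp only [if_pos rfl]
      rw [← aux_exp_one w hw j (fun t => (G j t) ^ 2)]
      refine Finset.sum_congr rfl fun y _ => ?_
      ring
    · rw [if_neg h]
      rw [aux_exp_two w hw i j (fun hij => h hij.symm) (G i) (G j)]
      rw [hzero i, zero_mul]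
  simp_rw [this]
  simp

lemma aux_comp_sum {X : Type*} [Fintype X] [DecidableEq X] {n M : ℕ}
    (cw : Fin M → Fin n → X) (Q : X → ℝ) (hcomp : hasComposition n M cw Q)
    (m : Fin M) (F : X → ℝ) :
    ∑ i, F (cw m i) = ∑ a, (n * Q a) * F a := by
  rw [← Finset.sum_fiberwise Finset.univ (fun i => cw m i) (fun i => F (cw m i))]
  refine Finset.sum_congr rfl fun a _ => ?_
  have hconst : ∑ i ∈ Finset.univ.filter (fun i => cw m i = a), F (cw m i)
      = ∑ i ∈ Finset.univ.filter (fun i => cw m i = a), F a :=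
    Finset.sum_congr rfl fun i hi => by rw [(Finset.mem_filter.mp hi).2]
  rw [hconst, Finset.sum_const, nsmul_eq_mul, hcomp m a]

set_option maxHeartbeats 1000000 in
theorem stmt13 {X Y : Type*} [Fintype X] [Fintype Y] [DecidableEq X] [DecidableEq Y]
    [Nonempty X] [Nonempty Y]
    (W : X → Y → ℝ) (hW0 : ∀ x y, 0 ≤ W x y) (hW1 : ∀ x, ∑ y, W x y = 1)
    (ε : ℝ) (hε : ε ∈ Set.Ioo (1 / 2 : ℝ) 1)
    (hV : 0 < epsDispersion ε W)
    (a : ℝ) (ha : 2 / (1 - ε) < a)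
    (Φinv : ℝ) (hΦ : normalCDF Φinv = ε)
    (n : ℕ) (hn : 0 < n)
    (Rn : ℝ)
    (hRn : Rn = capacity W + Real.sqrt (epsDispersion ε W / n) * Φinv
      - Real.log (1 - ε - 2 / a) / n)
    (M : ℕ) (hM : 0 < M)
    (cw : Fin M → Fin n → X) (A : Fin M → Finset (Fin n → Y))
    (hdec : isDecoder n M A)
    (Q : X → ℝ) (hcomp : hasComposition n M cw Q)
    (hQV : condInfoVar Q W < epsDispersion ε W * Φinv ^ 2 / a)
    (hMrate : Real.exp (n * Rn) ≤ (M : ℝ)) :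
    ε + 1 / a ≤ avgErr W n M cw A ∧ ε < avgErr W n M cw A := by

  classical
  obtain ⟨hε1, hε2⟩ := hε
  have h1ε : (0:ℝ) < 1 - ε := by linarith
  have ha' : 2 < a * (1 - ε) := by
    rw [div_lt_iff₀ h1ε] at ha; linarith
  have hapos : (0:ℝ) < a := by nlinarith
  have h2a : 2 / a < 1 - ε := by rw [div_lt_iff₀ hapos]; nlinarith
  have hθ : (0:ℝ) < 1 - ε - 2 / a := by linarith
  have hΦpos : 0 < Φinv := aux_phinv_pos hε1 hΦ
  have hn0 : (0:ℝ) < n := by exact_mod_cast hn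
  have hMpos : (0:ℝ) < M := by exact_mod_cast hM
  have m0 : Fin M := ⟨0, hM⟩
  -- Q is a probability distribution
  have hQ0 : ∀ x, 0 ≤ Q x := by
    intro x
    have h1 : (0:ℝ) ≤ n * Q x := by
      rw [← hcomp m0 x]; positivity
    by_contra hq
    push_neg at hq
    nlinarith
  have hQ1 : ∑ x, Q x = 1 := by
    have h := aux_comp_sum cw Q hcomp m0 (fun _ => (1:ℝ))
    simp only [mul_one] at h
    rw [Finset.sum_const, Finset.card_univ, Fintype.card_fin, nsmul_eq_mul, mul_one,
      ← Finset.mul_sum] at h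
    have h2 : (n:ℝ) * 1 = (n:ℝ) * ∑ x, Q x := by rw [mul_one]; exact h
    exact (mul_left_cancel₀ hn0.ne' h2).symm
  have hQpos : ∀ (m : Fin M) (i : Fin n), 0 < Q (cw m i) := by
    intro m i
    have hmem : i ∈ Finset.univ.filter (fun j => cw m j = cw m i) := by simp
    have hcard : (1:ℝ) ≤ ((Finset.univ.filter (fun j => cw m j = cw m i)).card : ℝ) := by
      have := Finset.card_pos.mpr ⟨i, hmem⟩
      exact_mod_cast this
    rw [hcomp m (cw m i)] at hcard
    nlinarith
  -- abbreviations
  have hVε0 : (0:ℝ) < epsDispersion ε W := hV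
  have hI_le : mutualInfo Q W ≤ capacity W := aux_cap_ge W hW0 hW1 Q hQ0 hQ1
  have hVq0 : 0 ≤ condInfoVar Q W := by
    unfold condInfoVar
    refine Finset.sum_nonneg fun x _ => Finset.sum_nonneg fun y _ => ?_
    have := hQ0 x
    have := hW0 x y
    positivity
  set γ := (n:ℝ) * capacity W + Real.sqrt (n * epsDispersion ε W) * Φinv with hγdef
  have hsqrt : 0 < Real.sqrt (n * epsDispersion ε W) := Real.sqrt_pos.mpr (by positivity)
  have hγI : (n:ℝ) * mutualInfo Q W < γ := by
    have h1 : (n:ℝ) * mutualInfo Q W ≤ (n:ℝ) * capacity W :=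
      mul_le_mul_of_nonneg_left hI_le hn0.le
    nlinarith [mul_pos hsqrt hΦpos]
  -- output distribution facts
  have hout0 : ∀ t, 0 ≤ outDist Q W t := fun t =>
    Finset.sum_nonneg fun z _ => mul_nonneg (hQ0 z) (hW0 z t)
  have hout1 : ∑ t, outDist Q W t = 1 := by
    unfold outDist
    rw [Finset.sum_comm]
    simp_rw [← Finset.mul_sum, hW1, mul_one]
    exact hQ1
  have hν1 : ∑ y : Fin n → Y, ∏ i, outDist Q W (y i) = 1 := by
    rw [aux_sum_pi_prod (fun _ t => outDist Q W t)]
    simp [hout1]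
  -- the key per-codeword bound
  set B := (n:ℝ) * condInfoVar Q W / (γ - n * mutualInfo Q W) ^ 2 with hBdef
  have key : ∀ m : Fin M, ∑ y ∈ A m, ∏ i, W (cw m i) (y i)
      ≤ B + Real.exp γ * ∑ y ∈ A m, ∏ i, outDist Q W (y i) := by
    intro m
    have hw : ∀ i : Fin n, ∑ t, W (cw m i) t = 1 := fun i => hW1 _
    have hnI : ∑ i : Fin n, dKL Q W (cw m i) = n * mutualInfo Q W := by
      rw [aux_comp_sum cw Q hcomp m (dKL Q W), mutualInfo_eq_dKL, Finset.mul_sum]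
      exact Finset.sum_congr rfl fun a _ => by ring
    have hE : ∑ y : Fin n → Y, (∏ i, W (cw m i) (y i))
        * (∑ i, infoDens Q W (cw m i) (y i)) = n * mutualInfo Q W := by
      rw [aux_E_gen (fun i => W (cw m i)) hw (fun i t => infoDens Q W (cw m i) t)]
      exact hnI
    have hzero : ∀ i : Fin n, ∑ t, W (cw m i) t
        * (infoDens Q W (cw m i) t - dKL Q W (cw m i)) = 0 := by
      intro i
      simp_rw [mul_sub]
      rw [Finset.sum_sub_distrib, ← Finset.sum_mul, hw i, one_mul]
      show dKL Q W (cw m i) - dKL Q W (cw m i) = 0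
      ring
    have hVar : ∑ y : Fin n → Y, (∏ i, W (cw m i) (y i))
        * ((∑ i, infoDens Q W (cw m i) (y i)) - n * mutualInfo Q W) ^ 2
        = n * condInfoVar Q W := by
      have hdiff : ∀ y : Fin n → Y,
          (∑ i, infoDens Q W (cw m i) (y i)) - (n:ℝ) * mutualInfo Q W
          = ∑ i, (infoDens Q W (cw m i) (y i) - dKL Q W (cw m i)) := by
        intro y
        rw [Finset.sum_sub_distrib, hnI]
      simp_rw [hdiff]
      rw [aux_V_gen (fun i => W (cw m i)) hw
        (fun i t => infoDens Q W (cw m i) t - dKL Q W (cw m i)) hzero]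
      show ∑ i : Fin n, varX Q W (cw m i) = _
      rw [aux_comp_sum cw Q hcomp m (varX Q W), condInfoVar_eq_varX, Finset.mul_sum]
      exact Finset.sum_congr rfl fun a _ => by ring
    have hcom : ∀ y : Fin n → Y, (∑ i, infoDens Q W (cw m i) (y i)) ≤ γ →
        ∏ i, W (cw m i) (y i) ≤ Real.exp γ * ∏ i, outDist Q W (y i) := by
      intro y hy
      by_cases hz : ∀ i, 0 < W (cw m i) (y i)
      · have hPY : ∀ i, 0 < outDist Q W (y i) := by
          intro i
          have h1 : Q (cw m i) * W (cw m i) (y i) ≤ outDist Q W (y i) :=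
            Finset.single_le_sum (fun z _ => mul_nonneg (hQ0 z) (hW0 z (y i)))
              (Finset.mem_univ (cw m i))
          nlinarith [hQpos m i, hz i]
        have hν : 0 < ∏ i, outDist Q W (y i) := Finset.prod_pos fun i _ => hPY i
        have hexp : Real.exp (∑ i, infoDens Q W (cw m i) (y i))
            = (∏ i, W (cw m i) (y i)) / ∏ i, outDist Q W (y i) := by
          rw [Real.exp_sum, ← Finset.prod_div_distrib]
          refine Finset.prod_congr rfl fun i _ => ?_
          exact Real.exp_log (div_pos (hz i) (hPY i))
        have h2 := Real.exp_le_exp.mpr hy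
        rw [hexp, div_le_iff₀ hν] at h2
        linarith
      · push_neg at hz
        obtain ⟨i, hi⟩ := hz
        have hzero' : W (cw m i) (y i) = 0 := le_antisymm hi (hW0 _ _)
        rw [Finset.prod_eq_zero (Finset.mem_univ i) hzero']
        exact mul_nonneg (Real.exp_nonneg γ) (Finset.prod_nonneg fun j _ => hout0 (y j))
    exact aux_meta (fun y => ∏ i, W (cw m i) (y i)) (fun y => ∏ i, outDist Q W (y i))
      (fun y => ∑ i, infoDens Q W (cw m i) (y i))
      (fun y => Finset.prod_nonneg fun i _ => hW0 _ _)
      (fun y => Finset.prod_nonneg fun i _ => hout0 (y i))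
      (n * mutualInfo Q W) (n * condInfoVar Q W) γ hE hVar hγI hcom (A m)
  -- total probability one for each codeword
  have hμ1 : ∀ m : Fin M, ∑ y : Fin n → Y, ∏ i, W (cw m i) (y i) = 1 := by
    intro m
    rw [aux_sum_pi_prod (fun i t => W (cw m i) t)]
    simp [hW1]
  -- combine over codewords
  have hdisjtot : ∑ m, ∑ y ∈ A m, ∏ i, outDist Q W (y i) ≤ 1 :=
    aux_disj A hdec.1 (fun y => ∏ i, outDist Q W (y i))
      (fun y => Finset.prod_nonneg fun i _ => hout0 (y i)) hν1
  have hkeysum : (M:ℝ) - ∑ m, ∑ y ∈ (A m)ᶜ, ∏ i, W (cw m i) (y i)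
      ≤ M * B + Real.exp γ := by
    have h1 : ∀ m : Fin M, 1 - ∑ y ∈ (A m)ᶜ, ∏ i, W (cw m i) (y i)
        = ∑ y ∈ A m, ∏ i, W (cw m i) (y i) := by
      intro m
      have := Finset.sum_add_sum_compl (A m) (fun y => ∏ i, W (cw m i) (y i))
      rw [hμ1 m] at this
      linarith
    calc (M:ℝ) - ∑ m, ∑ y ∈ (A m)ᶜ, ∏ i, W (cw m i) (y i)
        = ∑ m : Fin M, (1 - ∑ y ∈ (A m)ᶜ, ∏ i, W (cw m i) (y i)) := by
          rw [Finset.sum_sub_distrib, Finset.sum_const, Finset.card_univ, Fintype.card_fin,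
            nsmul_eq_mul, mul_one]
      _ = ∑ m, ∑ y ∈ A m, ∏ i, W (cw m i) (y i) := Finset.sum_congr rfl fun m _ => h1 m
      _ ≤ ∑ m : Fin M, (B + Real.exp γ * ∑ y ∈ A m, ∏ i, outDist Q W (y i)) :=
          Finset.sum_le_sum fun m _ => key m
      _ = M * B + Real.exp γ * ∑ m, ∑ y ∈ A m, ∏ i, outDist Q W (y i) := by
          rw [Finset.sum_add_distrib, Finset.sum_const, Finset.card_univ, Fintype.card_fin,
            nsmul_eq_mul, ← Finset.mul_sum]
      _ ≤ M * B + Real.exp γ * 1 := by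
          have := mul_le_mul_of_nonneg_left hdisjtot (Real.exp_nonneg γ)
          linarith
      _ = M * B + Real.exp γ := by ring
  -- lower bound on avgErr
  have havg : avgErr W n M cw A = (M:ℝ)⁻¹ * ∑ m, ∑ y ∈ (A m)ᶜ, ∏ i, W (cw m i) (y i) := rfl
  have hlow : 1 - B - Real.exp γ / M ≤ avgErr W n M cw A := by
    rw [havg]
    have h2 : (M:ℝ) - M * B - Real.exp γ ≤ ∑ m, ∑ y ∈ (A m)ᶜ, ∏ i, W (cw m i) (y i) := by
      linarith
    calc 1 - B - Real.exp γ / M = (M:ℝ)⁻¹ * ((M:ℝ) - M * B - Real.exp γ) := by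
          field_simp
      _ ≤ (M:ℝ)⁻¹ * ∑ m, ∑ y ∈ (A m)ᶜ, ∏ i, W (cw m i) (y i) :=
          mul_le_mul_of_nonneg_left h2 (by positivity)
  -- bound exp γ / M
  have hexpM : Real.exp γ / M ≤ 1 - ε - 2 / a := by
    have h1 : Real.exp γ / M ≤ Real.exp γ / Real.exp (n * Rn) :=
      div_le_div_of_nonneg_left (Real.exp_nonneg γ) (Real.exp_pos _) hMrate
    rw [← Real.exp_sub] at h1
    have hsq2 : (n:ℝ) * Real.sqrt (epsDispersion ε W / n) = Real.sqrt (n * epsDispersion ε W) := by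
      rw [show (n:ℝ) * epsDispersion ε W = (n:ℝ)^2 * (epsDispersion ε W / n) by
        field_simp, Real.sqrt_mul (by positivity), Real.sqrt_sq hn0.le]
    have h2 : γ - n * Rn = Real.log (1 - ε - 2 / a) := by
      rw [hRn, hγdef]
      rw [mul_sub, mul_add, ← mul_assoc, hsq2, mul_div_cancel₀ _ hn0.ne']
      ring
    rw [h2, Real.exp_log hθ] at h1
    exact h1
  -- bound B
  have hden : (n:ℝ) * epsDispersion ε W * Φinv ^ 2 ≤ (γ - n * mutualInfo Q W) ^ 2 := by
    have h1 : Real.sqrt (n * epsDispersion ε W) * Φinv ≤ γ - n * mutualInfo Q W := by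
      have h2 : (n:ℝ) * mutualInfo Q W ≤ (n:ℝ) * capacity W :=
        mul_le_mul_of_nonneg_left hI_le hn0.le
      rw [hγdef]
      linarith
    have h3 : (Real.sqrt (n * epsDispersion ε W) * Φinv) ^ 2
        = n * epsDispersion ε W * Φinv ^ 2 := by
      rw [mul_pow, Real.sq_sqrt (by positivity)]
    nlinarith [mul_pos hsqrt hΦpos]
  have hBle : B ≤ 1 / a := by
    have hdenpos : (0:ℝ) < n * epsDispersion ε W * Φinv ^ 2 := by positivity
    have h3 : B ≤ (n:ℝ) * condInfoVar Q W / (n * epsDispersion ε W * Φinv ^ 2) := by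
      rw [hBdef]
      exact div_le_div_of_nonneg_left (by positivity) hdenpos hden
    have h4 : (n:ℝ) * condInfoVar Q W / (n * epsDispersion ε W * Φinv ^ 2)
        = condInfoVar Q W / (epsDispersion ε W * Φinv ^ 2) := by
      rw [mul_assoc, mul_div_mul_left _ _ hn0.ne']
    have h5 : condInfoVar Q W / (epsDispersion ε W * Φinv ^ 2) ≤ 1 / a := by
      rw [div_le_div_iff₀ (by positivity) hapos]
      have h6 : condInfoVar Q W * a < epsDispersion ε W * Φinv ^ 2 :=
        (lt_div_iff₀ hapos).mp hQV
      linarith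
    rw [h4] at h3
    linarith
  -- conclude
  have hfinal : ε + 1 / a ≤ avgErr W n M cw A := by
    have h7 : 2 / a = 2 * (1 / a) := by ring
    linarith
  refine ⟨hfinal, ?_⟩
  have : (0:ℝ) < 1 / a := by positivity
  linarith
end
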